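/- arXiv:2402.00772 — 4 statements merged into one kernel-verified Lean document; each statement's English description precedes it below -/
import Mathlib

section
/- Strong duality for the second-stage risk limiting dispatch linear program: for every u, d ∈ ℝ^N there exists a dual feasible triple (λ, ν⁺, ν⁻) whose dual objective value attains the primal optimum, i.e., λᵀ(d − u) − (f^max)ᵀ(ν⁺ + ν⁻) = Q(u, d). -/
open Finset

section Cone
variable {ι : Type} [Fintype ι] {E : Type} [NormedAddCommGroup E] [InnerProductSpace ℝ E]

lemma cone_carath_aux (v : ι → E) (n : ℕ) :
    ∀ (c : ι → ℝ), (Finset.univ.filter (fun i => c i ≠ 0)).card ≤ n →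
    (∀ i, 0 ≤ c i) →
    ∃ c' : ι → ℝ, (∀ i, 0 ≤ c' i) ∧ ∑ i, c' i • v i = ∑ i, c i • v i ∧
      LinearIndependent ℝ (fun i : {i // c' i ≠ 0} => v ↑i) := by
  classical
  induction n with
  | zero =>
    intro c hcard hc
    refine ⟨c, hc, rfl, ?_⟩
    have : ∀ i, c i = 0 := by
      intro i
      by_contra h
      have : i ∈ Finset.univ.filter (fun i => c i ≠ 0) := by simp [h]
      have := Finset.card_pos.mpr ⟨i, this⟩
      omega
    have : IsEmpty {i // c i ≠ 0} := ⟨fun x => x.2 (this x.1)⟩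
    exact linearIndependent_empty_type
  | succ n ih =>
    intro c hcard hc
    by_cases hind : LinearIndependent ℝ (fun i : {i // c i ≠ 0} => v ↑i)
    · exact ⟨c, hc, rfl, hind⟩
    · -- get a dependence relation
      obtain ⟨g, hg0, i₁, hgi₁⟩ := Fintype.not_linearIndependent_iff.mp hind
      set d : ι → ℝ := fun i => if h : c i ≠ 0 then g ⟨i, h⟩ else 0 with hd
      have hdsum : ∑ i, d i • v i = 0 := by
        rw [← hg0]
        have h1 : ∑ i, d i • v i = ∑ i ∈ Finset.univ.filter (fun i => c i ≠ 0), d i • v i := by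
          refine (Finset.sum_subset (Finset.filter_subset _ _) ?_).symm
          intro i _ hi
          simp only [Finset.mem_filter, Finset.mem_univ, true_and, not_not] at hi
          simp [hd, hi]
        have h2 : ∑ i ∈ Finset.univ.filter (fun i => c i ≠ 0), d i • v i
            = ∑ i : {i // c i ≠ 0}, d ↑i • v ↑i :=
          Finset.sum_subtype _ (by simp) _
        rw [h1, h2]
        apply Finset.sum_congr rfl
        intro i _
        simp [hd, i.2]
      have hdsupp : ∀ i, c i = 0 → d i = 0 := by
        intro i hi; simp [hd, hi]
      have hdne : d ↑i₁ ≠ 0 := by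
        simp only [hd, dif_pos i₁.2]
        exact hgi₁
      -- key step applying to d or -d
      have key : ∀ e : ι → ℝ, ∑ i, e i • v i = 0 → (∀ i, c i = 0 → e i = 0) →
          (∃ i, 0 < e i) →
          ∃ c' : ι → ℝ, (∀ i, 0 ≤ c' i) ∧ ∑ i, c' i • v i = ∑ i, c i • v i ∧
            LinearIndependent ℝ (fun i : {i // c' i ≠ 0} => v ↑i) := by
        intro e hesum hesupp ⟨i₂, hi₂⟩
        have hTne : (Finset.univ.filter (fun i => 0 < e i)).Nonempty := ⟨i₂, by simp [hi₂]⟩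
        obtain ⟨i₀, hi₀T, hi₀min⟩ := Finset.exists_min_image _ (fun i => c i / e i) hTne
        simp only [Finset.mem_filter, Finset.mem_univ, true_and] at hi₀T
        set t : ℝ := c i₀ / e i₀ with ht
        have ht0 : 0 ≤ t := div_nonneg (hc i₀) (le_of_lt hi₀T)
        set c'' : ι → ℝ := fun i => c i - t * e i with hc''
        have hc''nn : ∀ i, 0 ≤ c'' i := by
          intro i
          by_cases he : 0 < e i
          · have := hi₀min i (by simp [he])
            simp only [hc'']
            rw [sub_nonneg]
            calc t * e i ≤ (c i / e i) * e i := by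
                  apply mul_le_mul_of_nonneg_right _ (le_of_lt he)
                  exact this
              _ = c i := div_mul_cancel₀ _ (ne_of_gt he)
          · push_neg at he
            have : t * e i ≤ 0 := mul_nonpos_of_nonneg_of_nonpos ht0 he
            simp only [hc'']
            linarith [hc i]
        have hc''sum : ∑ i, c'' i • v i = ∑ i, c i • v i := by
          simp only [hc'', sub_smul, Finset.sum_sub_distrib]
          have : ∑ i, (t * e i) • v i = t • ∑ i, e i • v i := by
            rw [Finset.smul_sum]
            exact Finset.sum_congr rfl (fun i _ => by rw [smul_smul])
          rw [this, hesum, smul_zero, sub_zero]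
        have hsub : Finset.univ.filter (fun i => c'' i ≠ 0) ⊂
            Finset.univ.filter (fun i => c i ≠ 0) := by
          constructor
          · intro i hi
            simp only [Finset.mem_filter, Finset.mem_univ, true_and] at hi ⊢
            intro h
            exact hi (by simp [hc'', h, hesupp i h])
          · intro hsup
            have hci₀ : c i₀ ≠ 0 → False := fun h => by
              have hmem : i₀ ∈ Finset.univ.filter (fun i => c'' i ≠ 0) :=
                hsup (by simp [h])
              simp only [Finset.mem_filter, Finset.mem_univ, true_and] at hmem
              apply hmem
              simp [hc'', ht, div_mul_cancel₀ _ (ne_of_gt hi₀T)]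
            -- c i₀ = 0 would give e i₀ = 0, contradiction with 0 < e i₀
            by_cases h : c i₀ = 0
            · exact absurd (hesupp i₀ h) (ne_of_gt hi₀T)
            · exact hci₀ h
        have hcard' : (Finset.univ.filter (fun i => c'' i ≠ 0)).card ≤ n := by
          have := Finset.card_lt_card hsub
          omega
        obtain ⟨c', h1, h2, h3⟩ := ih c'' hcard' hc''nn
        exact ⟨c', h1, h2.trans hc''sum, h3⟩
      by_cases hpos : ∃ i, 0 < d i
      · exact key d hdsum hdsupp hpos
      · apply key (fun i => -d i)
        · simp only [neg_smul, Finset.sum_neg_distrib, hdsum, neg_zero]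
        · intro i hi; simp [hdsupp i hi]
        · push_neg at hpos
          refine ⟨i₁, ?_⟩
          have := hpos ↑i₁
          simp only [neg_pos]
          exact lt_of_le_of_ne this hdne

lemma cone_caratheodory (v : ι → E) (c : ι → ℝ) (hc : ∀ i, 0 ≤ c i) :
    ∃ c' : ι → ℝ, (∀ i, 0 ≤ c' i) ∧ ∑ i, c' i • v i = ∑ i, c i • v i ∧
      LinearIndependent ℝ (fun i : {i // c' i ≠ 0} => v ↑i) :=
  cone_carath_aux v _ c le_rfl hc

end Cone

open Finset

section Cone2
variable {ι : Type} [Fintype ι] {E : Type} [NormedAddCommGroup E] [InnerProductSpace ℝ E]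

lemma euclid_sum_apply {ι : Type} [Fintype ι] {κ : Type} [Fintype κ] (c : ι → ℝ)
    (v : ι → EuclideanSpace ℝ κ) (k : κ) :
    (∑ i, c i • v i) k = ∑ i, c i * v i k := by
  classical
  induction (Finset.univ : Finset ι) using Finset.induction with
  | empty => simp
  | insert a s h ih => simp_all [Finset.sum_insert h]

lemma sum_extend_support (v : ι → E) (s : Finset ι) (c : ι → ℝ)
    (hsupp : ∀ i, c i ≠ 0 → i ∈ s) :
    ∑ i : ↥s, c ↑i • v ↑i = ∑ i, c i • v i := by
  classical
  rw [Finset.sum_coe_sort s (fun i => c i • v i)]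
  refine Finset.sum_subset (Finset.subset_univ _) ?_
  intro i _ hi
  have : c i = 0 := by
    by_contra h
    exact hi (hsupp i h)
  simp [this]

lemma isClosed_fg_cone (v : ι → E) :
    IsClosed {x : E | ∃ c : ι → ℝ, (∀ i, 0 ≤ c i) ∧ x = ∑ i, c i • v i} := by
  classical
  let C : Finset ι → Set E := fun s =>
    {x : E | ∃ c : ι → ℝ, (∀ i, 0 ≤ c i) ∧ (∀ i, c i ≠ 0 → i ∈ s) ∧ x = ∑ i, c i • v i}
  have hCclosed : ∀ s : Finset ι, LinearIndependent ℝ (fun i : ↥s => v ↑i) → IsClosed (C s) := by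
    intro s hs
    let f : EuclideanSpace ℝ ↥s →ₗ[ℝ] E :=
      { toFun := fun c => ∑ i : ↥s, c i • v ↑i
        map_add' := by
          intro a b
          rw [← Finset.sum_add_distrib]
          exact Finset.sum_congr rfl (fun i _ => by rw [← add_smul]; rfl)
        map_smul' := by
          intro r a
          rw [Finset.smul_sum]
          exact Finset.sum_congr rfl (fun i _ => by rw [smul_smul]; rfl) }
    have hker : LinearMap.ker f = ⊥ := by
      rw [LinearMap.ker_eq_bot']
      intro m hm
      have := Fintype.linearIndependent_iff.mp hs m hm
      ext i
      exact this i
    have hemb := LinearMap.isClosedEmbedding_of_injective hker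
    have hPos : IsClosed {c : EuclideanSpace ℝ ↥s | ∀ i, 0 ≤ c i} := by
      have : {c : EuclideanSpace ℝ ↥s | ∀ i, 0 ≤ c i}
          = ⋂ i : ↥s, (EuclideanSpace.proj (𝕜 := ℝ) i) ⁻¹' (Set.Ici 0) := by
        ext c; simp [Set.mem_iInter]
      rw [this]
      exact isClosed_iInter (fun i => (isClosed_Ici).preimage (EuclideanSpace.proj i).continuous)
    have himg : IsClosed (f '' {c : EuclideanSpace ℝ ↥s | ∀ i, 0 ≤ c i}) :=
      hemb.isClosedMap _ hPos
    have heq : C s = f '' {c : EuclideanSpace ℝ ↥s | ∀ i, 0 ≤ c i} := by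
      ext x
      constructor
      · rintro ⟨c, hc, hsupp, rfl⟩
        refine ⟨WithLp.toLp 2 (fun i => c ↑i), fun i => hc ↑i, ?_⟩
        show ∑ i : ↥s, c ↑i • v ↑i = ∑ i, c i • v i
        exact sum_extend_support v s c hsupp
      · rintro ⟨c, hc, rfl⟩
        set ce : ι → ℝ := fun i => if h : i ∈ s then c ⟨i, h⟩ else 0 with hce
        refine ⟨ce, ?_, ?_, ?_⟩
        · intro i
          by_cases h : i ∈ s
          · simpa [hce, h] using hc ⟨i, h⟩
          · simp [hce, h]
        · intro i hi
          by_contra h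
          simp [hce, h] at hi
        · show f c = _
          show ∑ i : ↥s, c i • v ↑i = _
          rw [← sum_extend_support v s ce (by intro i hi; by_contra h; simp [hce, h] at hi)]
          apply Finset.sum_congr rfl
          intro i _
          simp [hce, i.2]
    rw [heq]
    exact himg
  have hunion : {x : E | ∃ c : ι → ℝ, (∀ i, 0 ≤ c i) ∧ x = ∑ i, c i • v i}
      = ⋃ s ∈ {s : Finset ι | LinearIndependent ℝ (fun i : ↥s => v ↑i)}, C s := by
    ext x
    simp only [Set.mem_iUnion, Set.mem_setOf_eq]
    constructor
    · rintro ⟨c, hc, rfl⟩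
      obtain ⟨c', hc', hsum, hind⟩ := cone_caratheodory v c hc
      refine ⟨Finset.univ.filter (fun i => c' i ≠ 0), ?_, c', hc', ?_, hsum.symm⟩
      · let e : {i : ι // i ∈ Finset.univ.filter (fun i => c' i ≠ 0)} ≃ {i : ι // c' i ≠ 0} :=
          Equiv.subtypeEquivRight (by simp)
        have hfe : (fun i : {i : ι // i ∈ Finset.univ.filter (fun i => c' i ≠ 0)} => v ↑i)
            = (fun i : {i : ι // c' i ≠ 0} => v ↑i) ∘ e := by
          funext i
          rfl
        rw [hfe]
        exact hind.comp e e.injective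
      · intro i hi; simp [hi]
    · rintro ⟨s, _, c, hc, _, rfl⟩
      exact ⟨c, hc, rfl⟩
  rw [hunion]
  exact Set.Finite.isClosed_biUnion (Set.toFinite _) (fun s hs => hCclosed s hs)

end Cone2

open Finset
open scoped RealInnerProductSpace

section Cone3
variable {ι : Type} [Fintype ι] {E : Type} [NormedAddCommGroup E] [InnerProductSpace ℝ E]
  [CompleteSpace E]

lemma cone_separation (v : ι → E) (b : E)
    (hb : ¬∃ c : ι → ℝ, (∀ i, 0 ≤ c i) ∧ b = ∑ i, c i • v i) :
    ∃ y : E, (∀ i, 0 ≤ ⟪v i, y⟫) ∧ ⟪y, b⟫ < 0 := by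
  classical
  let K : ConvexCone ℝ E :=
    { carrier := {x : E | ∃ c : ι → ℝ, (∀ i, 0 ≤ c i) ∧ x = ∑ i, c i • v i}
      smul_mem' := by
        rintro r hr x ⟨c, hc, rfl⟩
        refine ⟨fun i => r * c i, fun i => mul_nonneg (le_of_lt hr) (hc i), ?_⟩
        rw [Finset.smul_sum]
        exact Finset.sum_congr rfl (fun i _ => by rw [smul_smul])
      add_mem' := by
        rintro x ⟨c, hc, rfl⟩ y ⟨c', hc', rfl⟩
        refine ⟨fun i => c i + c' i, fun i => add_nonneg (hc i) (hc' i), ?_⟩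
        rw [← Finset.sum_add_distrib]
        exact Finset.sum_congr rfl (fun i _ => by rw [add_smul]) }
  have hne : (K : Set E).Nonempty := ⟨0, ⟨fun _ => 0, fun i => le_refl _, by simp⟩⟩
  have hcl : IsClosed (K : Set E) := isClosed_fg_cone v
  have hbK : b ∉ K := hb
  let P : ProperCone ℝ E :=
    { carrier := (K : Set E)
      add_mem' := fun ha hb => K.add_mem ha hb
      zero_mem' := ⟨fun _ => 0, fun _ => le_refl _, by simp⟩
      smul_mem' := by
        rintro r x ⟨c, hc, rfl⟩
        refine ⟨fun i => (r : ℝ) * c i, fun i => mul_nonneg r.2 (hc i), ?_⟩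
        show (r : ℝ) • ∑ i, c i • v i = _
        rw [Finset.smul_sum]
        exact Finset.sum_congr rfl (fun i _ => by rw [smul_smul])
      isClosed' := hcl }
  have hbP : b ∉ P := hb
  obtain ⟨y, hy1, hy2⟩ :=
    ConvexCone.hyperplane_separation_of_nonempty_of_isClosed_of_notMem P hbP
  refine ⟨y, fun i => ?_, by rw [real_inner_comm]; exact hy2⟩
  apply hy1
  refine ⟨fun j => if j = i then 1 else 0, fun j => by positivity, ?_⟩
  simp [ite_smul]

end Cone3

open Finset
open scoped RealInnerProductSpace

section Gale
variable {m n : Type} [Fintype m] [Fintype n]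

lemma gale (A : m → n → ℝ) (b : m → ℝ)
    (hinf : ¬ ∃ x : n → ℝ, ∀ i, b i ≤ ∑ j, A i j * x j) :
    ∃ y : m → ℝ, (∀ i, 0 ≤ y i) ∧ (∀ j, ∑ i, y i * A i j = 0) ∧ 0 < ∑ i, y i * b i := by
  classical
  let v : (n ⊕ n) ⊕ m → EuclideanSpace ℝ m := fun k =>
    Sum.elim (Sum.elim (fun j => (WithLp.toLp 2 (fun i => A i j) : EuclideanSpace ℝ m))
        (fun j => (WithLp.toLp 2 (fun i => -A i j) : EuclideanSpace ℝ m)))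
      (fun i' => (WithLp.toLp 2 (fun i => -(if i = i' then (1:ℝ) else 0)) : EuclideanSpace ℝ m)) k
  let bvec : EuclideanSpace ℝ m := (WithLp.toLp 2 (fun i => b i) : EuclideanSpace ℝ m)
  have hb : ¬∃ c : ((n ⊕ n) ⊕ m) → ℝ, (∀ k, 0 ≤ c k) ∧ bvec = ∑ k, c k • v k := by
    rintro ⟨c, hc, hceq⟩
    apply hinf
    refine ⟨fun j => c (Sum.inl (Sum.inl j)) - c (Sum.inl (Sum.inr j)), fun i => ?_⟩
    have hcoord : b i = ∑ k, c k * v k i := by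
      have h0 : bvec i = (∑ k, c k • v k) i := by rw [← hceq]
      rw [euclid_sum_apply c v i] at h0
      exact h0
    have h3 : ∑ i' : m, c (Sum.inr i') * v (Sum.inr i') i = -c (Sum.inr i) := by
      have : ∀ i' : m, c (Sum.inr i') * v (Sum.inr i') i
          = -(if i' = i then c (Sum.inr i') else 0) := by
        intro i'
        show c (Sum.inr i') * (-(if i = i' then (1:ℝ) else 0)) = _
        by_cases h : i = i'
        · simp [h]
        · simp [h, Ne.symm h]
      rw [Finset.sum_congr rfl (fun i' _ => this i'), Finset.sum_neg_distrib,
        Finset.sum_ite_eq' Finset.univ i (fun i' => c (Sum.inr i'))]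
      simp
    have hexp : ∑ k, c k * v k i
        = (∑ j, c (Sum.inl (Sum.inl j)) * A i j)
          + (∑ j, c (Sum.inl (Sum.inr j)) * (-A i j)) + (-c (Sum.inr i)) := by
      rw [Fintype.sum_sum_type, Fintype.sum_sum_type, h3]
      rfl
    have hsum : ∑ j, A i j * (c (Sum.inl (Sum.inl j)) - c (Sum.inl (Sum.inr j)))
        = (∑ j, c (Sum.inl (Sum.inl j)) * A i j)
          + (∑ j, c (Sum.inl (Sum.inr j)) * (-A i j)) := by
      rw [← Finset.sum_add_distrib]
      exact Finset.sum_congr rfl (fun j _ => by ring)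
    have := hc (Sum.inr i)
    rw [hcoord, hexp]
    linarith [hsum]
  obtain ⟨y, hy1, hy2⟩ := cone_separation v bvec hb
  refine ⟨fun i => -(y i), ?_, ?_, ?_⟩
  · intro i
    have := hy1 (Sum.inr i)
    rw [PiLp.inner_apply] at this
    simp only [RCLike.inner_apply, starRingEnd_apply, star_trivial] at this
    have h3 : ∑ i' : m, v (Sum.inr i) i' * y i' = -y i := by
      have : ∀ i' : m, v (Sum.inr i) i' * y i'
          = -(if i' = i then y i' else 0) := by
        intro i'
        show (-(if i' = i then (1:ℝ) else 0)) * y i' = _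
        by_cases h : i' = i <;> simp [h]
      rw [Finset.sum_congr rfl (fun i' _ => this i'), Finset.sum_neg_distrib,
        Finset.sum_ite_eq' Finset.univ i y]
      simp
    simp only [mul_comm (WithLp.ofLp y _)] at this
    rw [h3] at this
    dsimp only
    linarith
  · intro j
    have hp := hy1 (Sum.inl (Sum.inl j))
    have hm := hy1 (Sum.inl (Sum.inr j))
    rw [PiLp.inner_apply] at hp hm
    simp only [RCLike.inner_apply, starRingEnd_apply, star_trivial] at hp hm
    simp only [mul_comm (WithLp.ofLp y _)] at hp hm
    have hp' : (0:ℝ) ≤ ∑ i, A i j * y i := hp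
    have hm' : (0:ℝ) ≤ ∑ i, (-A i j) * y i := hm
    have hmm : ∑ i, (-A i j) * y i = -∑ i, A i j * y i := by
      rw [← Finset.sum_neg_distrib]
      exact Finset.sum_congr rfl (fun i _ => by ring)
    have hz : ∑ i, A i j * y i = 0 := by rw [hmm] at hm'; linarith
    calc ∑ i, -y i * A i j = -∑ i, A i j * y i := by
          rw [← Finset.sum_neg_distrib]
          exact Finset.sum_congr rfl (fun i _ => by ring)
      _ = 0 := by rw [hz]; ring
  · rw [PiLp.inner_apply] at hy2
    simp only [RCLike.inner_apply, starRingEnd_apply, star_trivial] at hy2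
    simp only [mul_comm (WithLp.ofLp bvec _)] at hy2
    have : ∑ i, -y i * b i = -∑ i, y i * bvec i := by
      rw [← Finset.sum_neg_distrib]
      exact Finset.sum_congr rfl (fun i _ => by ring)
    rw [this]
    linarith

end Gale

open Finset

section LP
variable {m n : Type} [Fintype m] [Fintype n]

lemma sum_mul_swap (y : m → ℝ) (A : m → n → ℝ) (x : n → ℝ) :
    ∑ i, y i * ∑ j, A i j * x j = ∑ j, (∑ i, y i * A i j) * x j := by
  simp only [Finset.mul_sum, Finset.sum_mul]
  rw [Finset.sum_comm]
  exact Finset.sum_congr rfl (fun j _ => Finset.sum_congr rfl (fun i _ => by ring))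

theorem lp_strong_duality (A : m → n → ℝ) (b : m → ℝ) (c : n → ℝ)
    (hfeas : ∃ x : n → ℝ, ∀ i, b i ≤ ∑ j, A i j * x j)
    (hbdd : ∃ z : ℝ, ∀ x : n → ℝ, (∀ i, b i ≤ ∑ j, A i j * x j) → z ≤ ∑ j, c j * x j) :
    ∃ y : m → ℝ, (∀ i, 0 ≤ y i) ∧ (∀ j, ∑ i, y i * A i j = c j) ∧
      ∑ i, y i * b i
        = sInf {v | ∃ x : n → ℝ, v = ∑ j, c j * x j ∧ ∀ i, b i ≤ ∑ j, A i j * x j} := by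
  classical
  obtain ⟨x₀, hx₀⟩ := hfeas
  obtain ⟨z, hz⟩ := hbdd
  set S := {v | ∃ x : n → ℝ, v = ∑ j, c j * x j ∧ ∀ i, b i ≤ ∑ j, A i j * x j} with hS
  have hSne : S.Nonempty := ⟨∑ j, c j * x₀ j, x₀, rfl, hx₀⟩
  have hSbdd : BddBelow S := ⟨z, by rintro v ⟨x, rfl, hx⟩; exact hz x hx⟩
  set Q := sInf S with hQ
  -- weak duality
  have weak : ∀ y : m → ℝ, (∀ i, 0 ≤ y i) → (∀ j, ∑ i, y i * A i j = c j) →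
      ∑ i, y i * b i ≤ Q := by
    intro y hy hyA
    apply le_csInf hSne
    rintro v ⟨x, rfl, hx⟩
    calc ∑ i, y i * b i ≤ ∑ i, y i * ∑ j, A i j * x j :=
          Finset.sum_le_sum (fun i _ => mul_le_mul_of_nonneg_left (hx i) (hy i))
      _ = ∑ j, (∑ i, y i * A i j) * x j := sum_mul_swap y A x
      _ = ∑ j, c j * x j := Finset.sum_congr rfl (fun j _ => by rw [hyA j])
  -- approximate dual solutions
  have hstep : ∀ ε : ℝ, 0 < ε → ∃ y : m → ℝ, (∀ i, 0 ≤ y i) ∧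
      (∀ j, ∑ i, y i * A i j = c j) ∧ Q - ε < ∑ i, y i * b i := by
    intro ε hε
    set A' : Option m → n → ℝ := fun i' j => i'.elim (-c j) (fun i => A i j) with hA'
    set b' : Option m → ℝ := fun i' => i'.elim (-(Q - ε)) b with hb'
    have hinf : ¬ ∃ x : n → ℝ, ∀ i', b' i' ≤ ∑ j, A' i' j * x j := by
      rintro ⟨x, hx⟩
      have hfeasx : ∀ i, b i ≤ ∑ j, A i j * x j := fun i => hx (some i)
      have hnone := hx none
      simp only [hb', hA', Option.elim] at hnone
      have h1 : ∑ j, -c j * x j = -∑ j, c j * x j := by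
        rw [← Finset.sum_neg_distrib]
        exact Finset.sum_congr rfl (fun j _ => by ring)
      rw [h1] at hnone
      have hQle : Q ≤ ∑ j, c j * x j := csInf_le hSbdd ⟨x, rfl, hfeasx⟩
      linarith
    obtain ⟨Y, hY0, hYA, hYb⟩ := gale A' b' hinf
    rw [Fintype.sum_option] at hYb
    have hYAj : ∀ j, ∑ i, Y (some i) * A i j = Y none * c j := by
      intro j
      have := hYA j
      rw [Fintype.sum_option] at this
      simp only [hA', Option.elim] at this
      linarith [this]
    by_cases ht : Y none = 0
    · exfalso
      have hb0 : 0 < ∑ i, Y (some i) * b i := by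
        rw [ht] at hYb; simpa [hb'] using hYb
      have hA0 : ∀ j, ∑ i, Y (some i) * A i j = 0 := by
        intro j; rw [hYAj j, ht, zero_mul]
      have : ∑ i, Y (some i) * b i ≤ 0 := by
        calc ∑ i, Y (some i) * b i ≤ ∑ i, Y (some i) * ∑ j, A i j * x₀ j :=
              Finset.sum_le_sum (fun i _ => mul_le_mul_of_nonneg_left (hx₀ i) (hY0 (some i)))
          _ = ∑ j, (∑ i, Y (some i) * A i j) * x₀ j := sum_mul_swap _ A x₀
          _ = 0 := by
              rw [Finset.sum_congr rfl (fun j _ => by rw [hA0 j, zero_mul])]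
              exact Finset.sum_const_zero
      linarith
    · have htpos : 0 < Y none := lt_of_le_of_ne (hY0 none) (Ne.symm ht)
      refine ⟨fun i => Y (some i) / Y none, fun i => div_nonneg (hY0 (some i)) (le_of_lt htpos),
        ?_, ?_⟩
      · intro j
        dsimp only
        have hdv : ∑ i, Y (some i) / Y none * A i j
            = (∑ i, Y (some i) * A i j) / Y none := by
          rw [Finset.sum_div]
          exact Finset.sum_congr rfl (fun i _ => by ring)
        rw [hdv, hYAj j]
        field_simp
      · dsimp only
        have hdv : ∑ i, Y (some i) / Y none * b i
            = (∑ i, Y (some i) * b i) / Y none := by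
          rw [Finset.sum_div]
          exact Finset.sum_congr rfl (fun i _ => by ring)
        rw [hdv, lt_div_iff₀ htpos]
        have h1 : 0 < Y none * (-(Q - ε)) + ∑ i, Y (some i) * b i := hYb
        nlinarith [h1]
  -- sequence of approximate duals
  have hstepk : ∀ k : ℕ, ∃ y : m → ℝ, (∀ i, 0 ≤ y i) ∧
      (∀ j, ∑ i, y i * A i j = c j) ∧ Q - 1/(k+1) < ∑ i, y i * b i :=
    fun k => hstep (1/(k+1)) (by positivity)
  choose Y hY0 hYA hYb using hstepk
  set q : ℕ → ℝ := fun k => ∑ i, Y k i * b i with hq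
  have hqle : ∀ k, q k ≤ Q := fun k => weak (Y k) (hY0 k) (hYA k)
  have hqtend : Filter.Tendsto q Filter.atTop (nhds Q) := by
    have h1 : Filter.Tendsto (fun k : ℕ => Q - 1/(k+1)) Filter.atTop (nhds Q) := by
      have := tendsto_one_div_add_atTop_nhds_zero_nat (𝕜 := ℝ)
      have := Filter.Tendsto.const_sub Q this
      simpa using this
    exact tendsto_of_tendsto_of_tendsto_of_le_of_le h1 tendsto_const_nhds
      (fun k => le_of_lt (hYb k)) hqle
  -- the cone in EuclideanSpace ℝ (Option n)
  set w : m → EuclideanSpace ℝ (Option n) :=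
    fun i => (WithLp.toLp 2 (fun o : Option n => o.elim (b i) (fun j => A i j)) : EuclideanSpace ℝ (Option n)) with hw
  set D := {x : EuclideanSpace ℝ (Option n) |
    ∃ yc : m → ℝ, (∀ i, 0 ≤ yc i) ∧ x = ∑ i, yc i • w i} with hD
  have hDclosed : IsClosed D := isClosed_fg_cone w
  set eN : EuclideanSpace ℝ (Option n) := WithLp.toLp 2 (fun o : Option n => o.elim 1 (fun _ => 0)) with heN
  set c0 : EuclideanSpace ℝ (Option n) := WithLp.toLp 2 (fun o : Option n => o.elim 0 c) with hc0
  set P : ℝ → EuclideanSpace ℝ (Option n) := fun r => r • eN + c0 with hP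
  have hPcoord : ∀ r o, P r o = o.elim r c := by
    intro r o
    show r * eN o + c0 o = _
    cases o <;> simp [heN, hc0]
  have hPmem : ∀ k : ℕ, P (q k) ∈ D := by
    intro k
    refine ⟨Y k, hY0 k, ?_⟩
    ext o
    rw [hPcoord, euclid_sum_apply]
    cases o with
    | none => exact hq ▸ rfl
    | some j =>
      show c j = ∑ i, Y k i * A i j
      exact (hYA k j).symm
  have hPcont : Filter.Tendsto (fun k => P (q k)) Filter.atTop (nhds (P Q)) := by
    have hcont : Continuous P := by
      have : Continuous (fun r : ℝ => r • eN + c0) :=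
        (continuous_id.smul continuous_const).add continuous_const
      exact this
    exact (hcont.tendsto Q).comp hqtend
  have hlim : P Q ∈ D :=
    hDclosed.mem_of_tendsto hPcont (Filter.Eventually.of_forall hPmem)
  obtain ⟨yc, hyc0, hyceq⟩ := hlim
  refine ⟨yc, hyc0, ?_, ?_⟩
  · intro j
    have h1 : P Q (some j) = (∑ i, yc i • w i) (some j) := by rw [hyceq]
    rw [euclid_sum_apply, hPcoord Q (some j)] at h1
    exact h1.symm
  · have h1 : P Q none = (∑ i, yc i • w i) none := by rw [hyceq]
    rw [euclid_sum_apply, hPcoord Q none] at h1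
    exact h1.symm

end LP

open Finset



/-- The second-stage value function `Q(u, d)` of the risk limiting dispatch LP:
the infimum of `βᵀ max(g, 0)` over pairs `(g, θ)` satisfying the power-balance
equality `u + g − d = Bθ` and the branch capacity constraints `−fmax ≤ Fθ ≤ fmax`. -/
noncomputable def Qval {N L : ℕ} (B : Matrix (Fin N) (Fin N) ℝ) (F : Matrix (Fin L) (Fin N) ℝ)
    (β : Fin N → ℝ) (fmax : Fin L → ℝ) (u d : Fin N → ℝ) : ℝ :=
  sInf {c : ℝ | ∃ g θ : Fin N → ℝ,
    c = ∑ i, β i * max (g i) 0 ∧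
    (∀ i, u i + g i - d i = B.mulVec θ i) ∧
    (∀ j, -fmax j ≤ F.mulVec θ j) ∧
    (∀ j, F.mulVec θ j ≤ fmax j)}

/-- Strong duality for the second-stage RLD linear program: for every `u, d` there is a
dual feasible triple `(λ, ν⁺, ν⁻)` (i.e. `0 ≤ λ ≤ β`, `ν⁺, ν⁻ ≥ 0`, `Bᵀλ = Fᵀ(ν⁺ − ν⁻)`)
whose dual objective value `λᵀ(d − u) − (fmax)ᵀ(ν⁺ + ν⁻)` equals `Q(u, d)`. -/
theorem strong_duality_second_stage {N L : ℕ}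
    (B : Matrix (Fin N) (Fin N) ℝ) (F : Matrix (Fin L) (Fin N) ℝ)
    (β : Fin N → ℝ) (fmax : Fin L → ℝ)
    (hβ : ∀ i, 0 ≤ β i) (hfmax : ∀ j, 0 ≤ fmax j)
    (u d : Fin N → ℝ) :
    ∃ (lam : Fin N → ℝ) (νp νm : Fin L → ℝ),
      (∀ i, 0 ≤ lam i) ∧ (∀ i, lam i ≤ β i) ∧
      (∀ j, 0 ≤ νp j) ∧ (∀ j, 0 ≤ νm j) ∧
      (∀ i, B.transpose.mulVec lam i = F.transpose.mulVec (νp - νm) i) ∧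
      (∑ i, lam i * (d i - u i)) - (∑ j, fmax j * (νp j + νm j)) = Qval B F β fmax u d := by
  classical
  set nn := (Fin N ⊕ Fin N) with hnn
  set mm := ((Fin N ⊕ Fin N) ⊕ (Fin L ⊕ Fin L)) with hmm
  set AA : mm → nn → ℝ := Sum.elim
    (Sum.elim (fun i => Sum.elim (fun i' => if i' = i then (1:ℝ) else 0) (fun _ => 0))
      (fun i => Sum.elim (fun i' => if i' = i then (1:ℝ) else 0) (fun k => -B i k)))
    (Sum.elim (fun j => Sum.elim (fun _ => (0:ℝ)) (fun k => -F j k))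
      (fun j => Sum.elim (fun _ => (0:ℝ)) (fun k => F j k))) with hAA
  set bb : mm → ℝ := Sum.elim (Sum.elim (fun _ => (0:ℝ)) (fun i => d i - u i))
    (Sum.elim (fun j => -fmax j) (fun j => -fmax j)) with hbb
  set cc : nn → ℝ := Sum.elim β (fun _ => 0) with hcc
  -- row computations
  have hrow1 : ∀ (x : nn → ℝ) (i : Fin N),
      ∑ j, AA (Sum.inl (Sum.inl i)) j * x j = x (Sum.inl i) := by
    intro x i
    rw [Fintype.sum_sum_type]
    simp [hAA, ite_mul, Finset.sum_ite_eq']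
  have hrow2 : ∀ (x : nn → ℝ) (i : Fin N),
      ∑ j, AA (Sum.inl (Sum.inr i)) j * x j
        = x (Sum.inl i) - ∑ k, B i k * x (Sum.inr k) := by
    intro x i
    rw [Fintype.sum_sum_type]
    simp [hAA, ite_mul, Finset.sum_ite_eq', sub_eq_add_neg, ← Finset.sum_neg_distrib]
  have hrow3 : ∀ (x : nn → ℝ) (j : Fin L),
      ∑ j', AA (Sum.inr (Sum.inl j)) j' * x j' = -∑ k, F j k * x (Sum.inr k) := by
    intro x j
    rw [Fintype.sum_sum_type]
    simp [hAA, ← Finset.sum_neg_distrib]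
  have hrow4 : ∀ (x : nn → ℝ) (j : Fin L),
      ∑ j', AA (Sum.inr (Sum.inr j)) j' * x j' = ∑ k, F j k * x (Sum.inr k) := by
    intro x j
    rw [Fintype.sum_sum_type]
    simp [hAA]
  have hobj : ∀ (x : nn → ℝ), ∑ j, cc j * x j = ∑ i, β i * x (Sum.inl i) := by
    intro x
    rw [Fintype.sum_sum_type]
    simp [hcc]
  -- mulVec as sum
  have hmv : ∀ (θ : Fin N → ℝ) (i : Fin N), B.mulVec θ i = ∑ k, B i k * θ k := by
    intro θ i; rfl
  have hmvF : ∀ (θ : Fin N → ℝ) (j : Fin L), F.mulVec θ j = ∑ k, F j k * θ k := by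
    intro θ j; rfl
  -- feasibility of primal
  have hfeas : ∃ x : nn → ℝ, ∀ i, bb i ≤ ∑ j, AA i j * x j := by
    refine ⟨Sum.elim (fun i => max (d i - u i) 0) (fun _ => 0), ?_⟩
    rintro ((i|i)|(j|j))
    · rw [hrow1]
      simp [hbb]
    · rw [hrow2]
      simp [hbb]
    · rw [hrow3]
      simp [hbb, hfmax j]
    · rw [hrow4]
      simp [hbb, hfmax j]
  -- boundedness of primal
  have hbdd : ∃ z : ℝ, ∀ x : nn → ℝ, (∀ i, bb i ≤ ∑ j, AA i j * x j) → z ≤ ∑ j, cc j * x j := by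
    refine ⟨0, fun x hx => ?_⟩
    rw [hobj]
    apply Finset.sum_nonneg
    intro i _
    have := hx (Sum.inl (Sum.inl i))
    rw [hrow1] at this
    have h0 : bb (Sum.inl (Sum.inl i)) = 0 := rfl
    rw [h0] at this
    exact mul_nonneg (hβ i) this
  obtain ⟨y, hy0, hyA, hyobj⟩ := lp_strong_duality AA bb cc hfeas hbdd
  set lam : Fin N → ℝ := fun i => y (Sum.inl (Sum.inr i)) with hlam
  set νm : Fin L → ℝ := fun j => y (Sum.inr (Sum.inl j)) with hνm
  set νp : Fin L → ℝ := fun j => y (Sum.inr (Sum.inr j)) with hνp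
  -- column computations
  have hcol1 : ∀ i' : Fin N, ∑ i, y i * AA i (Sum.inl i')
      = y (Sum.inl (Sum.inl i')) + lam i' := by
    intro i'
    rw [Fintype.sum_sum_type, Fintype.sum_sum_type, Fintype.sum_sum_type]
    simp [hAA, mul_ite, Finset.sum_ite_eq, hlam]
  have hcol2 : ∀ k : Fin N, ∑ i, y i * AA i (Sum.inr k)
      = -∑ i, lam i * B i k - ∑ j, νm j * F j k + ∑ j, νp j * F j k := by
    intro k
    rw [Fintype.sum_sum_type, Fintype.sum_sum_type, Fintype.sum_sum_type]
    have h1 : ∑ i, y (Sum.inl (Sum.inl i)) * AA (Sum.inl (Sum.inl i)) (Sum.inr k) = 0 := by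
      simp [hAA]
    have h2 : ∑ i, y (Sum.inl (Sum.inr i)) * AA (Sum.inl (Sum.inr i)) (Sum.inr k)
        = -∑ i, lam i * B i k := by
      rw [← Finset.sum_neg_distrib]
      apply Finset.sum_congr rfl
      intro i _
      show y (Sum.inl (Sum.inr i)) * (-B i k) = _
      ring
    have h3 : ∑ j, y (Sum.inr (Sum.inl j)) * AA (Sum.inr (Sum.inl j)) (Sum.inr k)
        = -∑ j, νm j * F j k := by
      rw [← Finset.sum_neg_distrib]
      apply Finset.sum_congr rfl
      intro j _
      show y (Sum.inr (Sum.inl j)) * (-F j k) = _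
      ring
    have h4 : ∑ j, y (Sum.inr (Sum.inr j)) * AA (Sum.inr (Sum.inr j)) (Sum.inr k)
        = ∑ j, νp j * F j k := by
      apply Finset.sum_congr rfl
      intro j _
      show y (Sum.inr (Sum.inr j)) * F j k = _
      ring
    rw [h1, h2, h3, h4]
    ring
  have hdual1 : ∀ i', y (Sum.inl (Sum.inl i')) + lam i' = β i' := by
    intro i'
    have := hyA (Sum.inl i')
    rw [hcol1] at this
    exact this
  have hdual2 : ∀ k, -∑ i, lam i * B i k - ∑ j, νm j * F j k + ∑ j, νp j * F j k = 0 := by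
    intro k
    have := hyA (Sum.inr k)
    rw [hcol2] at this
    exact this
  -- objective computation
  have hobjdual : ∑ i, y i * bb i
      = (∑ i, lam i * (d i - u i)) - (∑ j, fmax j * (νp j + νm j)) := by
    rw [Fintype.sum_sum_type, Fintype.sum_sum_type, Fintype.sum_sum_type]
    have h1 : ∑ i, y (Sum.inl (Sum.inl i)) * bb (Sum.inl (Sum.inl i)) = 0 := by
      simp [hbb]
    have h2 : ∑ i, y (Sum.inl (Sum.inr i)) * bb (Sum.inl (Sum.inr i))
        = ∑ i, lam i * (d i - u i) := by
      apply Finset.sum_congr rfl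
      intro i _
      rfl
    have h3 : ∑ j, y (Sum.inr (Sum.inl j)) * bb (Sum.inr (Sum.inl j))
        = ∑ j, νm j * (-fmax j) := by
      apply Finset.sum_congr rfl
      intro j _
      rfl
    have h4 : ∑ j, y (Sum.inr (Sum.inr j)) * bb (Sum.inr (Sum.inr j))
        = ∑ j, νp j * (-fmax j) := by
      apply Finset.sum_congr rfl
      intro j _
      rfl
    rw [h1, h2, h3, h4]
    have h5 : ∑ j, fmax j * (νp j + νm j) = -(∑ j, νm j * (-fmax j) + ∑ j, νp j * (-fmax j)) := by
      rw [← Finset.sum_add_distrib, ← Finset.sum_neg_distrib]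
      exact Finset.sum_congr rfl (fun j _ => by ring)
    rw [h5]
    ring
  -- identification of the two infima
  have hinfeq : sInf {v | ∃ x : nn → ℝ, v = ∑ j, cc j * x j ∧ ∀ i, bb i ≤ ∑ j, AA i j * x j}
      = Qval B F β fmax u d := by
    set S1 := {c : ℝ | ∃ g θ : Fin N → ℝ,
      c = ∑ i, β i * max (g i) 0 ∧
      (∀ i, u i + g i - d i = B.mulVec θ i) ∧
      (∀ j, -fmax j ≤ F.mulVec θ j) ∧
      (∀ j, F.mulVec θ j ≤ fmax j)} with hS1
    set S2 := {v | ∃ x : nn → ℝ, v = ∑ j, cc j * x j ∧ ∀ i, bb i ≤ ∑ j, AA i j * x j} with hS2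
    have hsub : S1 ⊆ S2 := by
      rintro v ⟨g, θ, rfl, heq, h3, h4⟩
      refine ⟨Sum.elim (fun i => max (g i) 0) θ, ?_, ?_⟩
      · rw [hobj]
        simp
      · rintro ((i|i)|(j|j))
        · rw [hrow1]
          simp [hbb]
        · rw [hrow2]
          have hBi : ∑ k, B i k * θ k = B.mulVec θ i := (hmv θ i).symm
          have := heq i
          have h0 : bb (Sum.inl (Sum.inr i)) = d i - u i := rfl
          rw [h0]
          simp only [Sum.elim_inl, Sum.elim_inr]
          rw [hBi, ← this]
          have := le_max_left (g i) 0
          linarith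
        · rw [hrow3]
          have h0 : bb (Sum.inr (Sum.inl j)) = -fmax j := rfl
          rw [h0]
          simp only [Sum.elim_inr]
          rw [show ∑ k, F j k * θ k = F.mulVec θ j from (hmvF θ j).symm]
          linarith [h4 j]
        · rw [hrow4]
          have h0 : bb (Sum.inr (Sum.inr j)) = -fmax j := rfl
          rw [h0]
          simp only [Sum.elim_inr]
          rw [show ∑ k, F j k * θ k = F.mulVec θ j from (hmvF θ j).symm]
          linarith [h3 j]
    have hge : ∀ v ∈ S2, ∃ s ∈ S1, s ≤ v := by
      rintro v ⟨x, rfl, hx⟩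
      set θ : Fin N → ℝ := fun k => x (Sum.inr k) with hθ
      set g : Fin N → ℝ := fun i => B.mulVec θ i - u i + d i with hg
      have hxpos : ∀ i, 0 ≤ x (Sum.inl i) := by
        intro i
        have := hx (Sum.inl (Sum.inl i))
        rw [hrow1] at this
        exact this
      have hxgeg : ∀ i, g i ≤ x (Sum.inl i) := by
        intro i
        have := hx (Sum.inl (Sum.inr i))
        rw [hrow2] at this
        have hBi : ∑ k, B i k * x (Sum.inr k) = B.mulVec θ i := (hmv θ i).symm
        rw [hBi] at this
        have h0 : bb (Sum.inl (Sum.inr i)) = d i - u i := rfl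
        rw [h0] at this
        simp only [hg]
        linarith
      refine ⟨∑ i, β i * max (g i) 0, ⟨g, θ, rfl, ?_, ?_, ?_⟩, ?_⟩
      · intro i
        simp only [hg]
        ring
      · intro j
        have := hx (Sum.inr (Sum.inr j))
        rw [hrow4] at this
        have h0 : bb (Sum.inr (Sum.inr j)) = -fmax j := rfl
        rw [h0] at this
        rw [show ∑ k, F j k * x (Sum.inr k) = F.mulVec θ j from (hmvF θ j).symm] at this
        exact this
      · intro j
        have := hx (Sum.inr (Sum.inl j))
        rw [hrow3] at this
        have h0 : bb (Sum.inr (Sum.inl j)) = -fmax j := rfl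
        rw [h0] at this
        rw [show ∑ k, F j k * x (Sum.inr k) = F.mulVec θ j from (hmvF θ j).symm] at this
        linarith
      · rw [hobj]
        apply Finset.sum_le_sum
        intro i _
        apply mul_le_mul_of_nonneg_left _ (hβ i)
        exact max_le (hxgeg i) (hxpos i)
    have hS1ne : S1.Nonempty := by
      refine ⟨∑ i, β i * max (d i - u i) 0, fun i => d i - u i, 0, rfl, ?_, ?_, ?_⟩
      · intro i
        simp [Matrix.mulVec_zero]
      · intro j
        simp [Matrix.mulVec_zero, hfmax j]
      · intro j
        simp [Matrix.mulVec_zero, hfmax j]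
    have hS2ne : S2.Nonempty := by
      obtain ⟨x, hx⟩ := hfeas
      exact ⟨∑ j, cc j * x j, x, rfl, hx⟩
    have hS1bdd : BddBelow S1 := by
      refine ⟨0, ?_⟩
      rintro v ⟨g, θ, rfl, _, _, _⟩
      exact Finset.sum_nonneg (fun i _ => mul_nonneg (hβ i) (le_max_right _ _))
    have hS2bdd : BddBelow S2 := by
      obtain ⟨z, hz⟩ := hbdd
      exact ⟨z, by rintro v ⟨x, rfl, hx⟩; exact hz x hx⟩
    apply le_antisymm
    · exact csInf_le_csInf hS2bdd hS1ne hsub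
    · apply le_csInf hS2ne
      intro v hv
      obtain ⟨s, hs, hle⟩ := hge v hv
      exact le_trans (csInf_le hS1bdd hs) hle
  refine ⟨lam, νp, νm, fun i => hy0 _, ?_, fun j => hy0 _, fun j => hy0 _, ?_, ?_⟩
  · intro i
    have := hdual1 i
    have h0 := hy0 (Sum.inl (Sum.inl i))
    linarith
  · intro k
    have := hdual2 k
    have hlhs : B.transpose.mulVec lam k = ∑ i, B i k * lam i := by
      rw [Matrix.mulVec]
      apply Finset.sum_congr rfl
      intro i _
      show B.transpose k i * lam i = _
      rw [Matrix.transpose_apply]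
    have hrhs : F.transpose.mulVec (νp - νm) k = ∑ j, F j k * (νp j - νm j) := by
      rw [Matrix.mulVec]
      apply Finset.sum_congr rfl
      intro j _
      show F.transpose k j * (νp - νm) j = _
      rw [Matrix.transpose_apply, Pi.sub_apply]
    rw [hlhs, hrhs]
    have hsplit : ∑ j, F j k * (νp j - νm j) = ∑ j, νp j * F j k - ∑ j, νm j * F j k := by
      rw [← Finset.sum_sub_distrib]
      exact Finset.sum_congr rfl (fun j _ => by ring)
    rw [hsplit]
    have hB : ∑ i, B i k * lam i = ∑ i, lam i * B i k :=
      Finset.sum_congr rfl (fun i _ => by ring)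
    rw [hB]
    linarith
  · rw [← hobjdual, hyobj, hinfeq]
end

section
/- Vector contraction inequality (Lemma 1, Maurer): let X be a set, x₁, …, x_M ∈ X, let H be a nonempty set of functions from X to ℝ^N such that for each m the set {h(x_m) : h ∈ H} ⊆ ℝ^N is bounded, and for each m = 1, …, M let ψ_m : ℝ^N → ℝ be C-Lipschitz with respect to the Euclidean norm. Then E_ξ[ sup_{h ∈ H} Σ_{m=1}^M ξ_m ψ_m(h(x_m)) ] ≤ √2 · C · E_{ξ'}[ sup_{h ∈ H} Σ_{m=1}^M Σ_{j=1}^N ξ'_{m,j} (h(x_m))_j ], where ξ is uniform over {−1,+1}^M and ξ' is uniform over {−1,+1}^{M×N}. -/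
/-- The real sign `+1`/`−1` associated with a Boolean, used to enumerate sign vectors
`ξ ∈ {−1, +1}^I` as functions `I → Bool`. -/
noncomputable def sgn (b : Bool) : ℝ := if b then 1 else -1


lemma sgn_mul_self (b : Bool) : sgn b * sgn b = 1 := by cases b <;> simp [sgn]
lemma abs_sgn (b : Bool) : |sgn b| = 1 := by cases b <;> simp [sgn]
lemma sgn_not (b : Bool) : sgn (!b) = - sgn b := by cases b <;> simp [sgn]
lemma sgn_mul_sgn (b b' : Bool) : sgn b * sgn b' = if b = b' then 1 else -1 := by
  cases b <;> cases b' <;> simp [sgn]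

section Walsh
variable {n : ℕ}

/-- Walsh character. -/
noncomputable def chi (A : Finset (Fin n)) (ε : Fin n → Bool) : ℝ := ∏ i ∈ A, sgn (ε i)

lemma sum_chi (A : Finset (Fin n)) :
    ∑ ε : Fin n → Bool, chi A ε = if A = ∅ then (2^n : ℝ) else 0 := by
  have h1 : ∀ ε : Fin n → Bool, chi A ε = ∏ i, (if i ∈ A then sgn (ε i) else 1) := by
    intro ε
    rw [Finset.prod_ite_mem, Finset.univ_inter, chi]
  simp_rw [h1]
  have key := (Finset.prod_univ_sum (fun _ : Fin n => (Finset.univ : Finset Bool))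
    (fun i b => if i ∈ A then sgn b else 1)).symm
  rw [Fintype.piFinset_univ] at key
  rw [key]
  by_cases hA : A = ∅
  · simp [hA]
  · obtain ⟨i0, hi0⟩ := Finset.nonempty_iff_ne_empty.2 hA
    rw [if_neg hA]
    apply Finset.prod_eq_zero (Finset.mem_univ i0)
    simp [hi0, sgn]

lemma sum_chi_mul_chi (ε ε' : Fin n → Bool) :
    ∑ A : Finset (Fin n), chi A ε * chi A ε' = if ε = ε' then (2^n : ℝ) else 0 := by
  have h1 : ∀ A : Finset (Fin n), chi A ε * chi A ε'
      = ∏ i ∈ A, (sgn (ε i) * sgn (ε' i)) := by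
    intro A; rw [chi, chi, Finset.prod_mul_distrib]
  simp_rw [h1]
  have h2 : ∑ A : Finset (Fin n), ∏ i ∈ A, (sgn (ε i) * sgn (ε' i))
      = ∑ A ∈ (Finset.univ : Finset (Fin n)).powerset,
          (∏ i ∈ A, (sgn (ε i) * sgn (ε' i))) * ∏ _i ∈ Finset.univ \ A, (1:ℝ) := by
    rw [Finset.powerset_univ]
    exact Finset.sum_congr rfl fun A _ => by rw [Finset.prod_const_one, mul_one]
  rw [h2, ← Finset.prod_add]
  by_cases h : ε = ε'
  · subst h
    rw [if_pos rfl]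
    have h3 : ∀ i ∈ Finset.univ, sgn (ε i) * sgn (ε i) + (1:ℝ) = 2 := by
      intro i _; rw [sgn_mul_self]; norm_num
    rw [Finset.prod_congr rfl h3, Finset.prod_const]
    simp
  · rw [if_neg h]
    obtain ⟨i0, hi0⟩ : ∃ i, ε i ≠ ε' i := by
      by_contra hc; push_neg at hc; exact h (funext hc)
    apply Finset.prod_eq_zero (Finset.mem_univ i0)
    rw [sgn_mul_sgn, if_neg hi0]
    norm_num

/-- Unnormalized Walsh--Fourier coefficient. -/
noncomputable def wcoef (f : (Fin n → Bool) → ℝ) (A : Finset (Fin n)) : ℝ :=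
  ∑ ε : Fin n → Bool, f ε * chi A ε

lemma sum_wcoef_mul_chi (f : (Fin n → Bool) → ℝ) (ε : Fin n → Bool) :
    ∑ A : Finset (Fin n), wcoef f A * chi A ε = 2^n * f ε := by
  simp_rw [wcoef, Finset.sum_mul]
  rw [Finset.sum_comm]
  have h1 : ∀ ε' : Fin n → Bool, ∑ A : Finset (Fin n), f ε' * chi A ε' * chi A ε
      = f ε' * (if ε' = ε then (2^n : ℝ) else 0) := by
    intro ε'
    rw [← sum_chi_mul_chi ε' ε, Finset.mul_sum]
    exact Finset.sum_congr rfl fun A _ => (mul_assoc _ _ _)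
  simp_rw [h1, mul_ite, mul_zero]
  rw [Finset.sum_ite_eq' Finset.univ ε (fun ε' => f ε' * 2^n)]
  simp [mul_comm]

lemma parseval2 (f g : (Fin n → Bool) → ℝ) :
    ∑ A : Finset (Fin n), wcoef f A * wcoef g A = 2^n * ∑ ε : Fin n → Bool, f ε * g ε := by
  have h1 : ∀ A : Finset (Fin n), wcoef f A * wcoef g A
      = ∑ ε : Fin n → Bool, f ε * (chi A ε * wcoef g A) := by
    intro A
    nth_rewrite 1 [wcoef]
    rw [Finset.sum_mul]
    exact Finset.sum_congr rfl fun ε _ => mul_assoc _ _ _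
  simp_rw [h1]
  rw [Finset.sum_comm]
  have h2 : ∀ ε : Fin n → Bool, ∑ A : Finset (Fin n), f ε * (chi A ε * wcoef g A)
      = f ε * (2^n * g ε) := by
    intro ε
    rw [← Finset.mul_sum, ← sum_wcoef_mul_chi g ε]
    congr 1
    exact Finset.sum_congr rfl fun A _ => mul_comm _ _
  simp_rw [h2]
  have h3 : ∀ ε : Fin n → Bool, f ε * ((2:ℝ)^n * g ε) = 2^n * (f ε * g ε) := fun ε => by ring
  simp_rw [h3, ← Finset.mul_sum]

lemma flip_invol (i : Fin n) :
    Function.Involutive (fun ε : Fin n → Bool => Function.update ε i (!(ε i))) := by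
  intro ε
  funext j
  by_cases hj : j = i
  · subst hj
    simp [Function.update_self]
  · simp [Function.update_of_ne hj]

lemma neg_invol : Function.Involutive (fun ε : Fin n → Bool => (fun j => !(ε j))) := by
  intro ε; funext j; simp

lemma sum_invol {h : (Fin n → Bool) → ℝ} {σ : (Fin n → Bool) → (Fin n → Bool)}
    (hσ : Function.Involutive σ) :
    ∑ ε : Fin n → Bool, h (σ ε) = ∑ ε : Fin n → Bool, h ε :=
  Function.Bijective.sum_comp hσ.bijective h

lemma chi_flip (A : Finset (Fin n)) (i : Fin n) (ε : Fin n → Bool) :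
    chi A (Function.update ε i (!(ε i))) = (if i ∈ A then (-1:ℝ) else 1) * chi A ε := by
  by_cases hi : i ∈ A
  · rw [if_pos hi, chi, chi, ← Finset.mul_prod_erase A _ hi, ← Finset.mul_prod_erase A _ hi]
    have h1 : ∀ j ∈ A.erase i, sgn (Function.update ε i (!(ε i)) j) = sgn (ε j) := by
      intro j hj
      rw [Function.update_of_ne (Finset.ne_of_mem_erase hj)]
    rw [Finset.prod_congr rfl h1, Function.update_self, sgn_not]
    ring
  · rw [if_neg hi, one_mul, chi, chi]
    refine Finset.prod_congr rfl fun j hj => ?_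
    have hji : j ≠ i := fun h => hi (h ▸ hj)
    rw [Function.update_of_ne hji]

lemma chi_neg (A : Finset (Fin n)) (ε : Fin n → Bool) :
    chi A (fun j => !(ε j)) = (-1)^A.card * chi A ε := by
  rw [chi, chi, ← Finset.prod_const (-1 : ℝ), ← Finset.prod_mul_distrib]
  exact Finset.prod_congr rfl fun j _ => by rw [sgn_not]; ring

lemma wcoef_flip (f : (Fin n → Bool) → ℝ) (i : Fin n) (A : Finset (Fin n)) :
    wcoef (fun ε => f (Function.update ε i (!(ε i)))) A
      = (if i ∈ A then (-1:ℝ) else 1) * wcoef f A := by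
  rw [wcoef]
  have h1 : ∑ ε : Fin n → Bool, f (Function.update ε i (!(ε i))) * chi A ε
      = ∑ ε : Fin n → Bool, f ε * chi A (Function.update ε i (!(ε i))) := by
    rw [← sum_invol (h := fun ε => f ε * chi A (Function.update ε i (!(ε i)))) (flip_invol i)]
    apply Finset.sum_congr rfl
    intro ε _
    have := flip_invol i ε
    simp only [] at this ⊢
    rw [this]
  rw [h1]
  simp_rw [chi_flip]
  rw [wcoef, Finset.mul_sum]
  exact Finset.sum_congr rfl fun ε _ => by ring

lemma wcoef_even_vanish (f : (Fin n → Bool) → ℝ)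
    (hf : ∀ ε : Fin n → Bool, f (fun j => !(ε j)) = f ε)
    (A : Finset (Fin n)) (hA : ¬ Even A.card) : wcoef f A = 0 := by
  have h1 : wcoef f A = ∑ ε : Fin n → Bool, f (fun j => !(ε j)) * chi A (fun j => !(ε j)) := by
    rw [wcoef, ← sum_invol (h := fun ε => f ε * chi A ε) neg_invol]
  have h2 : wcoef f A = (-1)^A.card * wcoef f A := by
    conv_lhs => rw [h1]
    simp_rw [hf, chi_neg]
    unfold wcoef
    rw [Finset.mul_sum]
    exact Finset.sum_congr rfl fun ε _ => by ring
  have h3 : ((-1:ℝ))^A.card = -1 := Odd.neg_one_pow (Nat.not_even_iff_odd.1 hA)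
  rw [h3] at h2
  linarith

lemma sum_sgn_mul_sgn (j k : Fin n) :
    ∑ ε : Fin n → Bool, sgn (ε j) * sgn (ε k) = if j = k then (2^n : ℝ) else 0 := by
  by_cases h : j = k
  · subst h
    rw [if_pos rfl]
    simp_rw [sgn_mul_self]
    simp
  · rw [if_neg h]
    have h1 : ∀ ε : Fin n → Bool, sgn (ε j) * sgn (ε k) = chi {j,k} ε := by
      intro ε; rw [chi, Finset.prod_pair h]
    simp_rw [h1]
    rw [sum_chi, if_neg (Finset.insert_ne_empty _ _)]

lemma sum_sq (a : Fin n → ℝ) :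
    ∑ ε : Fin n → Bool, (∑ j, sgn (ε j) * a j)^2 = 2^n * ∑ j, (a j)^2 := by
  have h1 : ∀ ε : Fin n → Bool, (∑ j, sgn (ε j) * a j)^2
      = ∑ j, ∑ k, (a j * a k) * (sgn (ε j) * sgn (ε k)) := by
    intro ε
    rw [sq, Finset.sum_mul_sum]
    exact Finset.sum_congr rfl fun j _ => Finset.sum_congr rfl fun k _ => by ring
  simp_rw [h1]
  rw [Finset.sum_comm]
  have h2 : ∀ j : Fin n, ∑ ε : Fin n → Bool, ∑ k, (a j * a k) * (sgn (ε j) * sgn (ε k))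
      = 2^n * (a j)^2 := by
    intro j
    rw [Finset.sum_comm]
    have h3 : ∀ k : Fin n, ∑ ε : Fin n → Bool, (a j * a k) * (sgn (ε j) * sgn (ε k))
        = (a j * a k) * (if j = k then (2^n : ℝ) else 0) := by
      intro k
      rw [← Finset.mul_sum, sum_sgn_mul_sgn]
    simp_rw [h3, mul_ite, mul_zero]
    rw [Finset.sum_ite_eq Finset.univ j (fun k => a j * a k * 2^n)]
    simp [sq]
    ring
  simp_rw [h2, ← Finset.mul_sum]

lemma sum_sgn_update (ε : Fin n → Bool) (i : Fin n) (b : Bool) (a : Fin n → ℝ) :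
    ∑ j, sgn (Function.update ε i b j) * a j
      = (∑ j, sgn (ε j) * a j) - sgn (ε i) * a i + sgn b * a i := by
  have hupd : (fun j => sgn (Function.update ε i b j) * a j)
      = Function.update (fun j => sgn (ε j) * a j) i (sgn b * a i) := by
    funext j
    by_cases hj : j = i
    · subst hj; rw [Function.update_self, Function.update_self]
    · rw [Function.update_of_ne hj, Function.update_of_ne hj]
  rw [show (∑ j, sgn (Function.update ε i b j) * a j)
      = ∑ j, Function.update (fun j => sgn (ε j) * a j) i (sgn b * a i) j from
      Finset.sum_congr rfl fun j _ => congrFun hupd j]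
  rw [Finset.sum_update_of_mem (Finset.mem_univ i)]
  have h2 := Finset.add_sum_erase Finset.univ (fun j => sgn (ε j) * a j) (Finset.mem_univ i)
  rw [Finset.erase_eq] at h2
  linarith [h2]

theorem szarek (a : Fin n → ℝ) :
    Real.sqrt (∑ j, (a j)^2)
      ≤ Real.sqrt 2 * (((2:ℝ)^n)⁻¹ * ∑ ε : Fin n → Bool, |∑ j, sgn (ε j) * a j|) := by
  classical
  set s : (Fin n → Bool) → ℝ := fun ε => ∑ j, sgn (ε j) * a j with hs
  set f : (Fin n → Bool) → ℝ := fun ε => |s ε| with hf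
  set t : ℝ := (2:ℝ)^n with htdef
  have ht : 0 < t := by positivity
  -- Parseval
  have hP : ∑ A : Finset (Fin n), (wcoef f A)^2 = t * ∑ ε : Fin n → Bool, (f ε)^2 := by
    have := parseval2 f f
    simp_rw [← sq] at this
    exact this
  have hfs : ∀ ε, (f ε)^2 = (s ε)^2 := fun ε => sq_abs _
  have hsum_sq : ∑ ε : Fin n → Bool, (f ε)^2 = t * ∑ j, (a j)^2 := by
    simp_rw [hfs]
    exact sum_sq a
  -- evenness
  have heven : ∀ ε : Fin n → Bool, f (fun j => !(ε j)) = f ε := by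
    intro ε
    have : s (fun j => !(ε j)) = - s ε := by
      rw [hs]
      simp only []
      rw [← Finset.sum_neg_distrib]
      exact Finset.sum_congr rfl fun j _ => by rw [sgn_not]; ring
    rw [hf]
    simp only []
    rw [this, abs_neg]
  -- flip difference bound, coefficient level
  have hDi : ∀ i : Fin n,
      (∑ A : Finset (Fin n), (wcoef f A)^2)
        - (∑ A : Finset (Fin n), (if i ∈ A then (-1:ℝ) else 1) * (wcoef f A)^2)
      ≤ t * (t * (2 * (a i)^2)) := by
    intro i
    set g : (Fin n → Bool) → ℝ := fun ε => f (Function.update ε i (!(ε i))) with hg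
    have hD : ∑ A : Finset (Fin n), (if i ∈ A then (-1:ℝ) else 1) * (wcoef f A)^2
        = t * ∑ ε : Fin n → Bool, f ε * g ε := by
      have h1 := parseval2 f g
      have h2 : ∀ A : Finset (Fin n), wcoef f A * wcoef g A
          = (if i ∈ A then (-1:ℝ) else 1) * (wcoef f A)^2 := by
        intro A
        rw [hg, wcoef_flip f i A]
        ring
      simp_rw [h2] at h1
      exact h1
    -- pointwise bound
    have hpt : ∀ ε : Fin n → Bool, (f ε - g ε)^2 ≤ 4 * (a i)^2 := by
      intro ε
      have hsg : s (Function.update ε i (!(ε i))) = s ε - 2 * sgn (ε i) * a i := by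
        rw [hs]
        simp only []
        rw [sum_sgn_update ε i (!(ε i)) a, sgn_not]
        ring
      have habs : |f ε - g ε| ≤ |2 * sgn (ε i) * a i| := by
        rw [hf, hg]
        simp only []
        calc |(|s ε|) - (|s (Function.update ε i (!(ε i)))|)|
            ≤ |s ε - s (Function.update ε i (!(ε i)))| := abs_abs_sub_abs_le_abs_sub _ _
          _ = |2 * sgn (ε i) * a i| := by rw [hsg]; ring_nf
      have h2ai : |2 * sgn (ε i) * a i| = 2 * |a i| := by
        rw [abs_mul, abs_mul, abs_sgn]
        simp [abs_of_nonneg]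
      calc (f ε - g ε)^2 = |f ε - g ε|^2 := (sq_abs _).symm
        _ ≤ (2 * |a i|)^2 := by
            apply pow_le_pow_left₀ (abs_nonneg _)
            rw [← h2ai]; exact habs
        _ = 4 * (a i)^2 := by rw [mul_pow, sq_abs]; norm_num
    -- sum of squares of differences
    have hgsq : ∑ ε : Fin n → Bool, (g ε)^2 = ∑ ε : Fin n → Bool, (f ε)^2 := by
      rw [hg]
      exact sum_invol (h := fun ε => (f ε)^2) (flip_invol i)
    have hdiff : ∑ ε : Fin n → Bool, (f ε - g ε)^2
        = 2 * ∑ ε : Fin n → Bool, (f ε)^2 - 2 * ∑ ε : Fin n → Bool, f ε * g ε := by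
      have e1 : ∀ ε : Fin n → Bool, (f ε - g ε)^2
          = ((f ε)^2 + (g ε)^2) - 2 * (f ε * g ε) := fun ε => by ring
      rw [Finset.sum_congr rfl fun ε _ => e1 ε, Finset.sum_sub_distrib,
        Finset.sum_add_distrib, hgsq, ← Finset.mul_sum]
      ring
    have hdiffle : ∑ ε : Fin n → Bool, (f ε - g ε)^2 ≤ t * (4 * (a i)^2) := by
      calc ∑ ε : Fin n → Bool, (f ε - g ε)^2 ≤ ∑ _ε : Fin n → Bool, 4 * (a i)^2 :=
            Finset.sum_le_sum fun ε _ => hpt ε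
        _ = t * (4 * (a i)^2) := by
            rw [Finset.sum_const, nsmul_eq_mul, htdef]
            norm_num [Fintype.card_fun]
    rw [hP, hD, ← mul_sub]
    exact mul_le_mul_of_nonneg_left (by linarith [hdiff, hdiffle]) ht.le
  -- sum over i
  have hsumi : ∑ A : Finset (Fin n), (2 * (A.card : ℝ)) * (wcoef f A)^2
      ≤ t * (t * (2 * ∑ j, (a j)^2)) := by
    have lhs_eq : ∑ i : Fin n, ((∑ A : Finset (Fin n), (wcoef f A)^2)
        - ∑ A : Finset (Fin n), (if i ∈ A then (-1:ℝ) else 1) * (wcoef f A)^2)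
        = ∑ A : Finset (Fin n), (2 * (A.card:ℝ)) * (wcoef f A)^2 := by
      have e1 : ∀ i : Fin n, (∑ A : Finset (Fin n), (wcoef f A)^2)
          - ∑ A : Finset (Fin n), (if i ∈ A then (-1:ℝ) else 1) * (wcoef f A)^2
          = ∑ A : Finset (Fin n), (if i ∈ A then (2:ℝ) else 0) * (wcoef f A)^2 := by
        intro i
        rw [← Finset.sum_sub_distrib]
        exact Finset.sum_congr rfl fun A _ => by by_cases hiA : i ∈ A <;> simp [hiA] <;> ring
      simp_rw [e1]
      rw [Finset.sum_comm]
      apply Finset.sum_congr rfl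
      intro A _
      rw [← Finset.sum_mul]
      congr 1
      rw [Finset.sum_ite_mem, Finset.univ_inter, Finset.sum_const, nsmul_eq_mul]
      ring
    rw [← lhs_eq]
    calc ∑ i : Fin n, ((∑ A : Finset (Fin n), (wcoef f A)^2)
        - ∑ A : Finset (Fin n), (if i ∈ A then (-1:ℝ) else 1) * (wcoef f A)^2)
        ≤ ∑ i : Fin n, t * (t * (2 * (a i)^2)) := Finset.sum_le_sum fun i _ => hDi i
      _ = t * (t * (2 * ∑ j, (a j)^2)) := by
          simp_rw [← Finset.mul_sum]
  -- the nonempty-set part of the spectrum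
  have hT : 4 * (∑ A ∈ Finset.univ.erase (∅ : Finset (Fin n)), (wcoef f A)^2)
      ≤ ∑ A : Finset (Fin n), (2 * (A.card:ℝ)) * (wcoef f A)^2 := by
    rw [Finset.mul_sum]
    calc ∑ A ∈ Finset.univ.erase (∅ : Finset (Fin n)), 4 * (wcoef f A)^2
        ≤ ∑ A ∈ Finset.univ.erase (∅ : Finset (Fin n)), (2 * (A.card:ℝ)) * (wcoef f A)^2 := by
          apply Finset.sum_le_sum
          intro A hA
          by_cases hw : wcoef f A = 0
          · rw [hw]
            simp
          · have hcard : 2 ≤ A.card := by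
              have hkeven : Even A.card := by
                by_contra hodd
                exact hw (wcoef_even_vanish f heven A hodd)
              have hpos : 0 < A.card := Finset.card_pos.2
                (Finset.nonempty_iff_ne_empty.2 (Finset.ne_of_mem_erase hA))
              rcases hkeven with ⟨k, hk⟩
              omega
            have : (4:ℝ) ≤ 2 * (A.card:ℝ) := by
              have : (2:ℝ) ≤ (A.card:ℝ) := by exact_mod_cast hcard
              linarith
            exact mul_le_mul_of_nonneg_right this (sq_nonneg _)
      _ ≤ ∑ A : Finset (Fin n), (2 * (A.card:ℝ)) * (wcoef f A)^2 := by
          apply Finset.sum_le_sum_of_subset_of_nonneg (Finset.erase_subset _ _)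
          intro A _ _
          positivity
  have hsplit : (wcoef f ∅)^2
      + (∑ A ∈ Finset.univ.erase (∅:Finset (Fin n)), (wcoef f A)^2)
      = ∑ A : Finset (Fin n), (wcoef f A)^2 :=
    Finset.add_sum_erase Finset.univ (fun A : Finset (Fin n) => (wcoef f A)^2) (Finset.mem_univ ∅)
  have hPA : ∑ A : Finset (Fin n), (wcoef f A)^2 = t * (t * ∑ j, (a j)^2) := by
    rw [hP, hsum_sq]
  have hW0 : t^2 * (∑ j, (a j)^2) ≤ 2 * (wcoef f ∅)^2 := by
    nlinarith [hsumi, hT, hsplit, hPA]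
  have hW0eq : wcoef f ∅ = ∑ ε : Fin n → Bool, f ε := by
    unfold wcoef
    apply Finset.sum_congr rfl
    intro ε _
    rw [chi]
    simp
  have hQ0 : 0 ≤ ∑ ε : Fin n → Bool, f ε :=
    Finset.sum_nonneg fun ε _ => abs_nonneg _
  have hfin : (∑ j, (a j)^2) ≤ (Real.sqrt 2 * (t⁻¹ * ∑ ε : Fin n → Bool, f ε))^2 := by
    have h1 : (Real.sqrt 2 * (t⁻¹ * ∑ ε : Fin n → Bool, f ε))^2
        = 2 * (∑ ε : Fin n → Bool, f ε)^2 / t^2 := by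
      rw [mul_pow, Real.sq_sqrt (by norm_num : (0:ℝ) ≤ 2), mul_pow, inv_pow]
      ring
    rw [h1, le_div_iff₀ (by positivity)]
    rw [hW0eq] at hW0
    nlinarith [hW0]
  calc Real.sqrt (∑ j, (a j)^2)
      ≤ Real.sqrt ((Real.sqrt 2 * (t⁻¹ * ∑ ε : Fin n → Bool, f ε))^2) :=
        Real.sqrt_le_sqrt hfin
    _ = Real.sqrt 2 * (t⁻¹ * ∑ ε : Fin n → Bool, f ε) := by
        apply Real.sqrt_sq
        positivity

end Walsh

section Step
variable {ι : Type*} {N : ℕ}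

lemma coord_le_norm (v : EuclideanSpace ℝ (Fin N)) (j : Fin N) : |v j| ≤ ‖v‖ := by
  rw [EuclideanSpace.norm_eq, show |v j| = Real.sqrt ((v j)^2) by rw [Real.sqrt_sq_eq_abs]]
  apply Real.sqrt_le_sqrt
  calc (v j)^2 = ‖v j‖^2 := by rw [Real.norm_eq_abs, sq_abs]
    _ ≤ ∑ i, ‖v i‖^2 :=
      Finset.single_le_sum (fun i _ => sq_nonneg ‖v i‖) (Finset.mem_univ j)

lemma norm_eq_sqrt_sum (u w : EuclideanSpace ℝ (Fin N)) :
    ‖u - w‖ = Real.sqrt (∑ j, (u j - w j)^2) := by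
  rw [EuclideanSpace.norm_eq]
  congr 1
  apply Finset.sum_congr rfl
  intro j _
  rw [PiLp.sub_apply, Real.norm_eq_abs, sq_abs]

lemma stepB (s : Set ι) (hs : s.Nonempty) (a : ι → ℝ) (v : ι → EuclideanSpace ℝ (Fin N))
    (C : NNReal) (ψ : EuclideanSpace ℝ (Fin N) → ℝ) (hψ : LipschitzWith C ψ)
    (Ba : ℝ) (hBa : ∀ i ∈ s, |a i| ≤ Ba) (Bv : ℝ) (hBv : ∀ i ∈ s, ‖v i‖ ≤ Bv) :
    (2:ℝ)⁻¹ * ∑ b : Bool, sSup ((fun i => a i + sgn b * ψ (v i)) '' s)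
      ≤ ((2:ℝ)^N)⁻¹ * ∑ w : Fin N → Bool,
          sSup ((fun i => a i + Real.sqrt 2 * (C:ℝ) * ∑ j, sgn (w j) * v i j) '' s) := by
  classical
  obtain ⟨i0, hi0⟩ := hs
  have hBv0 : 0 ≤ Bv := le_trans (norm_nonneg _) (hBv i0 hi0)
  have h2N : (0:ℝ) < 2^N := by positivity
  have hC0 : (0:ℝ) ≤ Real.sqrt 2 * (C:ℝ) := by positivity
  -- bounds for the linear functionals
  have hlinbound : ∀ (w : Fin N → Bool), ∀ i ∈ s,
      a i + Real.sqrt 2 * (C:ℝ) * ∑ j, sgn (w j) * v i j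
        ≤ Ba + Real.sqrt 2 * (C:ℝ) * ((N:ℝ) * Bv) := by
    intro w i hi
    apply add_le_add ((le_abs_self _).trans (hBa i hi))
    apply mul_le_mul_of_nonneg_left _ hC0
    calc ∑ j, sgn (w j) * v i j ≤ |∑ j, sgn (w j) * v i j| := le_abs_self _
      _ ≤ ∑ j, |sgn (w j) * v i j| := Finset.abs_sum_le_sum_abs _ _
      _ = ∑ j, |v i j| := by
          apply Finset.sum_congr rfl
          intro j _
          rw [abs_mul, abs_sgn, one_mul]
      _ ≤ ∑ _j : Fin N, Bv := Finset.sum_le_sum fun j _ =>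
          le_trans (coord_le_norm (v i) j) (hBv i hi)
      _ = (N:ℝ) * Bv := by rw [Finset.sum_const, nsmul_eq_mul]; norm_num
  have hlinbdd : ∀ (w : Fin N → Bool),
      BddAbove ((fun i => a i + Real.sqrt 2 * (C:ℝ) * ∑ j, sgn (w j) * v i j) '' s) := by
    intro w
    refine ⟨Ba + Real.sqrt 2 * (C:ℝ) * ((N:ℝ) * Bv), ?_⟩
    rintro y ⟨i, hi, rfl⟩
    exact hlinbound w i hi
  have hlinne : ∀ (w : Fin N → Bool),
      ((fun i => a i + Real.sqrt 2 * (C:ℝ) * ∑ j, sgn (w j) * v i j) '' s).Nonempty :=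
    fun w => Set.Nonempty.image _ ⟨i0, hi0⟩
  set S : (Fin N → Bool) → ℝ :=
    fun w => sSup ((fun i => a i + Real.sqrt 2 * (C:ℝ) * ∑ j, sgn (w j) * v i j) '' s) with hSdef
  -- flipping all signs
  have hSneg : ∑ w : Fin N → Bool, S (fun j => !(w j)) = ∑ w : Fin N → Bool, S w :=
    sum_invol (h := S) neg_invol
  -- the key pairwise inequality
  have hkey : ∀ i ∈ s, ∀ i' ∈ s,
      (a i + ψ (v i)) + (a i' - ψ (v i'))
        ≤ 2 * (((2:ℝ)^N)⁻¹ * ∑ w : Fin N → Bool, S w) := by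
    intro i hi i' hi'
    have hlip : ψ (v i) - ψ (v i') ≤ (C:ℝ) * ‖v i - v i'‖ := by
      have h1 := hψ.dist_le_mul (v i) (v i')
      rw [Real.dist_eq, dist_eq_norm] at h1
      exact (le_abs_self _).trans h1
    have hsz : ‖v i - v i'‖ ≤ Real.sqrt 2 *
        (((2:ℝ)^N)⁻¹ * ∑ w : Fin N → Bool, |∑ j, sgn (w j) * (v i j - v i' j)|) := by
      rw [norm_eq_sqrt_sum]
      exact szarek (fun j => v i j - v i' j)
    -- per sign-vector comparison
    have hper : ∀ w : Fin N → Bool,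
        (a i + a i') + Real.sqrt 2 * (C:ℝ) * |∑ j, sgn (w j) * (v i j - v i' j)|
          ≤ S w + S (fun j => !(w j)) := by
      intro w
      have hmem : ∀ (w' : Fin N → Bool) (i₁ : ι), i₁ ∈ s →
          a i₁ + Real.sqrt 2 * (C:ℝ) * ∑ j, sgn (w' j) * v i₁ j ≤ S w' := by
        intro w' i₁ hi₁
        exact le_csSup (hlinbdd w') ⟨i₁, hi₁, rfl⟩
      have hflip : ∀ i₁ : ι, ∑ j, sgn ((fun j => !(w j)) j) * v i₁ j
          = - ∑ j, sgn (w j) * v i₁ j := by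
        intro i₁
        rw [← Finset.sum_neg_distrib]
        apply Finset.sum_congr rfl
        intro j _
        rw [sgn_not]
        ring
      have hsub : ∑ j, sgn (w j) * (v i j - v i' j)
          = (∑ j, sgn (w j) * v i j) - ∑ j, sgn (w j) * v i' j := by
        rw [← Finset.sum_sub_distrib]
        exact Finset.sum_congr rfl fun j _ => by ring
      rcases abs_cases (∑ j, sgn (w j) * (v i j - v i' j)) with ⟨he, _⟩ | ⟨he, _⟩ <;>
        rw [he, hsub] <;>
        [skip; skip]
      · have h1 := hmem w i hi
        have h2 := hmem (fun j => !(w j)) i' hi'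
        rw [hflip i'] at h2
        linarith [h1, h2]
      · have h1 := hmem (fun j => !(w j)) i hi
        have h2 := hmem w i' hi'
        rw [hflip i] at h1
        linarith [h1, h2]
    -- sum over w
    have hsumw : (2:ℝ)^N * (a i + a i')
        + Real.sqrt 2 * (C:ℝ) * ∑ w : Fin N → Bool, |∑ j, sgn (w j) * (v i j - v i' j)|
        ≤ 2 * ∑ w : Fin N → Bool, S w := by
      have h1 : ∑ w : Fin N → Bool, ((a i + a i')
          + Real.sqrt 2 * (C:ℝ) * |∑ j, sgn (w j) * (v i j - v i' j)|)
          ≤ ∑ w : Fin N → Bool, (S w + S (fun j => !(w j))) :=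
        Finset.sum_le_sum fun w _ => hper w
      have hcard : ((Finset.univ : Finset (Fin N → Bool)).card : ℝ) = 2^N := by
        rw [Finset.card_univ]
        norm_num [Fintype.card_fun]
      have hl : ∑ w : Fin N → Bool, ((a i + a i')
          + Real.sqrt 2 * (C:ℝ) * |∑ j, sgn (w j) * (v i j - v i' j)|)
          = 2^N * (a i + a i') + Real.sqrt 2 * (C:ℝ)
            * ∑ w : Fin N → Bool, |∑ j, sgn (w j) * (v i j - v i' j)| := by
        rw [Finset.sum_add_distrib, Finset.sum_const, nsmul_eq_mul, hcard, ← Finset.mul_sum]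
      have hr : ∑ w : Fin N → Bool, (S w + S (fun j => !(w j)))
          = 2 * ∑ w : Fin N → Bool, S w := by
        rw [Finset.sum_add_distrib, hSneg]
        ring
      rw [hl, hr] at h1
      exact h1
    have e1 : (a i + ψ (v i)) + (a i' - ψ (v i'))
        ≤ (a i + a i') + (C:ℝ) * ‖v i - v i'‖ := by linarith [hlip]
    have e2 : (a i + a i') + (C:ℝ) * ‖v i - v i'‖
        ≤ (a i + a i') + Real.sqrt 2 * (C:ℝ) *
          (((2:ℝ)^N)⁻¹ * ∑ w : Fin N → Bool, |∑ j, sgn (w j) * (v i j - v i' j)|) := by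
      have := mul_le_mul_of_nonneg_left hsz (NNReal.coe_nonneg C)
      nlinarith [this]
    have e3 : (a i + a i') + Real.sqrt 2 * (C:ℝ) *
          (((2:ℝ)^N)⁻¹ * ∑ w : Fin N → Bool, |∑ j, sgn (w j) * (v i j - v i' j)|)
        ≤ 2 * (((2:ℝ)^N)⁻¹ * ∑ w : Fin N → Bool, S w) := by
      have h2 := mul_le_mul_of_nonneg_left hsumw (inv_nonneg.2 h2N.le)
      rw [mul_add] at h2
      rw [← mul_assoc ((2:ℝ)^N)⁻¹, inv_mul_cancel₀ (ne_of_gt h2N), one_mul] at h2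
      nlinarith [h2]
    linarith [e1, e2, e3]
  -- conclude via csSup on both Bool summands
  have hbddb : ∀ b : Bool, BddAbove ((fun i => a i + sgn b * ψ (v i)) '' s) := by
    intro b
    refine ⟨Ba + (|ψ 0| + (C:ℝ) * Bv), ?_⟩
    rintro y ⟨i, hi, rfl⟩
    show a i + sgn b * ψ (v i) ≤ Ba + (|ψ 0| + (C:ℝ) * Bv)
    have hψb : |ψ (v i)| ≤ |ψ 0| + (C:ℝ) * Bv := by
      have h1 := hψ.dist_le_mul (v i) 0
      rw [Real.dist_eq, dist_zero_right] at h1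
      have h2 : |ψ (v i)| - |ψ 0| ≤ (C:ℝ) * ‖v i‖ :=
        le_trans (abs_sub_abs_le_abs_sub _ _) h1
      have h3 : (C:ℝ) * ‖v i‖ ≤ (C:ℝ) * Bv :=
        mul_le_mul_of_nonneg_left (hBv i hi) (NNReal.coe_nonneg C)
      linarith
    have : sgn b * ψ (v i) ≤ |ψ (v i)| := by
      rcases abs_cases (ψ (v i)) with ⟨he, _⟩ | ⟨he, _⟩ <;> cases b <;>
        simp [sgn] <;> linarith [he, abs_nonneg (ψ (v i))]
    have ha := (le_abs_self (a i)).trans (hBa i hi)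
    linarith [hψb, this, ha]
  rw [Fintype.sum_bool]
  set R : ℝ := ((2:ℝ)^N)⁻¹ * ∑ w : Fin N → Bool, S w with hR
  have htrue : sSup ((fun i => a i + sgn true * ψ (v i)) '' s)
      + sSup ((fun i => a i + sgn false * ψ (v i)) '' s) ≤ 2 * R := by
    have h1 : sSup ((fun i => a i + sgn true * ψ (v i)) '' s)
        ≤ 2 * R - sSup ((fun i => a i + sgn false * ψ (v i)) '' s) := by
      apply csSup_le (Set.Nonempty.image _ ⟨i0, hi0⟩)
      rintro y ⟨i, hi, rfl⟩
      show a i + sgn true * ψ (v i) ≤ 2 * R - sSup ((fun i => a i + sgn false * ψ (v i)) '' s)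
      have h2 : sSup ((fun i => a i + sgn false * ψ (v i)) '' s)
          ≤ 2 * R - (a i + sgn true * ψ (v i)) := by
        apply csSup_le (Set.Nonempty.image _ ⟨i0, hi0⟩)
        rintro y' ⟨i', hi', rfl⟩
        show a i' + sgn false * ψ (v i') ≤ 2 * R - (a i + sgn true * ψ (v i))
        have hk := hkey i hi i' hi'
        have hsgnt : sgn true = 1 := by simp [sgn]
        have hsgnf : sgn false = -1 := by simp [sgn]
        rw [hsgnt, hsgnf]
        linarith [hk]
      linarith [h2]
    linarith [h1]
  linarith [htrue]

end Step

section Resample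
variable {α : Type*} [Fintype α] [DecidableEq α] {κ : Type*} [Fintype κ]

set_option maxHeartbeats 1000000 in
lemma resample (g : (α → κ) → ℝ) (i : α) :
    ∑ f : α → κ, ∑ w : κ, g (Function.update f i w)
      = (Fintype.card κ : ℝ) * ∑ f : α → κ, g f := by
  have hφ : Function.Involutive
      (fun p : (α → κ) × κ => (Function.update p.1 i p.2, p.1 i)) := by
    rintro ⟨f, w⟩
    simp only [Function.update_self, Function.update_idem, Function.update_eq_self]
  calc ∑ f : α → κ, ∑ w : κ, g (Function.update f i w)
      = ∑ p : (α → κ) × κ, g (Function.update p.1 i p.2) :=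
        (Fintype.sum_prod_type (fun p : (α → κ) × κ => g (Function.update p.1 i p.2))).symm
    _ = ∑ p : (α → κ) × κ, g p.1 :=
        Function.Bijective.sum_comp hφ.bijective (fun p => g p.1)
    _ = ∑ f : α → κ, ∑ _w : κ, g f := Fintype.sum_prod_type (fun p : (α → κ) × κ => g p.1)
    _ = (Fintype.card κ : ℝ) * ∑ f : α → κ, g f := by
        simp_rw [Finset.sum_const, Finset.card_univ, nsmul_eq_mul, ← Finset.mul_sum]

end Resample

lemma csSup_image_mul {ι : Type*} (s : Set ι) (hs : s.Nonempty) (g : ι → ℝ) (c : ℝ)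
    (hc : 0 ≤ c) (B : ℝ) (hB : ∀ i ∈ s, g i ≤ B) :
    sSup ((fun i => c * g i) '' s) = c * sSup (g '' s) := by
  have hbdd : BddAbove (g '' s) := ⟨B, by rintro y ⟨i, hi, rfl⟩; exact hB i hi⟩
  rcases eq_or_lt_of_le hc with hc0 | hcpos
  · have he : (fun i => c * g i) = fun _ => (0:ℝ) := by
      funext i; rw [← hc0, zero_mul]
    rw [he, Set.Nonempty.image_const hs, csSup_singleton, ← hc0, zero_mul]
  · have hbdd2 : BddAbove ((fun i => c * g i) '' s) := by
      refine ⟨c * B, ?_⟩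
      rintro y ⟨i, hi, rfl⟩
      exact mul_le_mul_of_nonneg_left (hB i hi) hc
    apply le_antisymm
    · apply csSup_le (hs.image _)
      rintro y ⟨i, hi, rfl⟩
      exact mul_le_mul_of_nonneg_left (le_csSup hbdd ⟨i, hi, rfl⟩) hc
    · rw [mul_comm, ← le_div_iff₀ hcpos]
      apply csSup_le (hs.image _)
      rintro y ⟨i, hi, rfl⟩
      rw [le_div_iff₀ hcpos, mul_comm]
      exact le_csSup hbdd2 ⟨i, hi, rfl⟩

section Main
variable {X : Type*} {M N : ℕ}

/-- Interpolation term in Maurer's induction. -/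
noncomputable def Fterm (x : Fin M → X) (C : NNReal)
    (ψ : Fin M → EuclideanSpace ℝ (Fin N) → ℝ) (k : ℕ) (ε : Fin M → Bool)
    (ε' : Fin M → Fin N → Bool) (m : Fin M) (h : X → EuclideanSpace ℝ (Fin N)) : ℝ :=
  if (m:ℕ) < k then Real.sqrt 2 * (C:ℝ) * ∑ j, sgn (ε' m j) * (h (x m)) j
  else sgn (ε m) * ψ m (h (x m))

/-- Interpolating quantity in Maurer's induction. -/
noncomputable def Gval (x : Fin M → X) (H : Set (X → EuclideanSpace ℝ (Fin N)))
    (C : NNReal) (ψ : Fin M → EuclideanSpace ℝ (Fin N) → ℝ) (k : ℕ) : ℝ :=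
  ((2:ℝ)^M)⁻¹ * (((2:ℝ)^(M*N))⁻¹ * ∑ ε : Fin M → Bool, ∑ ε' : Fin M → Fin N → Bool,
    sSup ((fun h => ∑ m, Fterm x C ψ k ε ε' m h) '' H))

lemma Fterm_bound (x : Fin M → X) (C : NNReal) (ψ : Fin M → EuclideanSpace ℝ (Fin N) → ℝ)
    (k : ℕ) (ε : Fin M → Bool) (ε' : Fin M → Fin N → Bool) (m : Fin M)
    (h : X → EuclideanSpace ℝ (Fin N)) (hψ : LipschitzWith C (ψ m))
    (Km : ℝ) (hKm : ‖h (x m)‖ ≤ Km) :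
    |Fterm x C ψ k ε ε' m h|
      ≤ Real.sqrt 2 * (C:ℝ) * ((N:ℝ) * Km) + (|ψ m 0| + (C:ℝ) * Km) := by
  have hKm0 : 0 ≤ Km := (norm_nonneg _).trans hKm
  have hψb : |ψ m (h (x m))| ≤ |ψ m 0| + (C:ℝ) * Km := by
    have h1 := hψ.dist_le_mul (h (x m)) 0
    rw [Real.dist_eq, dist_zero_right] at h1
    have h2 : |ψ m (h (x m))| - |ψ m 0| ≤ (C:ℝ) * ‖h (x m)‖ :=
      le_trans (abs_sub_abs_le_abs_sub _ _) h1
    have h3 : (C:ℝ) * ‖h (x m)‖ ≤ (C:ℝ) * Km :=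
      mul_le_mul_of_nonneg_left hKm (NNReal.coe_nonneg C)
    linarith
  have hlin : |∑ j, sgn (ε' m j) * (h (x m)) j| ≤ (N:ℝ) * Km := by
    calc |∑ j, sgn (ε' m j) * (h (x m)) j| ≤ ∑ j, |sgn (ε' m j) * (h (x m)) j| :=
          Finset.abs_sum_le_sum_abs _ _
      _ = ∑ j, |(h (x m)) j| := by
          apply Finset.sum_congr rfl
          intro j _
          rw [abs_mul, abs_sgn, one_mul]
      _ ≤ ∑ _j : Fin N, Km := Finset.sum_le_sum fun j _ =>
          le_trans (coord_le_norm (h (x m)) j) hKm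
      _ = (N:ℝ) * Km := by rw [Finset.sum_const, nsmul_eq_mul]; norm_num
  unfold Fterm
  by_cases hc : (m:ℕ) < k
  · rw [if_pos hc]
    have h4 : |Real.sqrt 2 * (C:ℝ) * ∑ j, sgn (ε' m j) * (h (x m)) j|
        ≤ Real.sqrt 2 * (C:ℝ) * ((N:ℝ) * Km) := by
      rw [abs_mul]
      have h5 : |Real.sqrt 2 * (C:ℝ)| = Real.sqrt 2 * (C:ℝ) := abs_of_nonneg (by positivity)
      rw [h5]
      exact mul_le_mul_of_nonneg_left hlin (by positivity)
    have h6 : (0:ℝ) ≤ |ψ m 0| + (C:ℝ) * Km := by positivity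
    linarith [le_abs_self (Real.sqrt 2 * (C:ℝ) * ∑ j, sgn (ε' m j) * (h (x m)) j), h4,
      abs_nonneg (Real.sqrt 2 * (C:ℝ) * ∑ j, sgn (ε' m j) * (h (x m)) j)]
  · rw [if_neg hc, abs_mul, abs_sgn, one_mul]
    have h6 : (0:ℝ) ≤ Real.sqrt 2 * (C:ℝ) * ((N:ℝ) * Km) := by positivity
    linarith [hψb]

set_option maxHeartbeats 1000000 in
lemma step_G (x : Fin M → X) (H : Set (X → EuclideanSpace ℝ (Fin N))) (hH : H.Nonempty)
    (C : NNReal) (ψ : Fin M → EuclideanSpace ℝ (Fin N) → ℝ)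
    (hψ : ∀ m, LipschitzWith C (ψ m))
    (K : Fin M → ℝ) (hK : ∀ m, ∀ h ∈ H, ‖h (x m)‖ ≤ K m) (k : ℕ) :
    Gval x H C ψ k ≤ Gval x H C ψ (k + 1) := by
  classical
  obtain ⟨h0, hh0⟩ := hH
  have hK0 : ∀ m, 0 ≤ K m := fun m => (norm_nonneg _).trans (hK m h0 hh0)
  by_cases hk : k < M
  swap
  · unfold Gval
    have hFe : ∀ (ε : Fin M → Bool) (ε' : Fin M → Fin N → Bool) (m : Fin M)
        (h : X → EuclideanSpace ℝ (Fin N)),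
        Fterm x C ψ k ε ε' m h = Fterm x C ψ (k+1) ε ε' m h := by
      intro ε ε' m h
      have h1 : (m:ℕ) < k := lt_of_lt_of_le m.isLt (le_of_not_gt hk)
      unfold Fterm
      rw [if_pos h1, if_pos (Nat.lt_succ_of_lt h1)]
    simp_rw [hFe]
    exact le_rfl
  · set kf : Fin M := ⟨k, hk⟩ with hkf
    unfold Gval
    set Sk : (Fin M → Bool) → (Fin M → Fin N → Bool) → ℝ := fun ε ε' =>
      sSup ((fun h => ∑ m, Fterm x C ψ k ε ε' m h) '' H) with hSk
    set Sk1 : (Fin M → Bool) → (Fin M → Fin N → Bool) → ℝ := fun ε ε' =>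
      sSup ((fun h => ∑ m, Fterm x C ψ (k+1) ε ε' m h) '' H) with hSk1
    set bnd : Fin M → ℝ := fun m =>
      Real.sqrt 2 * (C:ℝ) * ((N:ℝ) * K m) + (|ψ m 0| + (C:ℝ) * K m) with hbnd
    have hbnd0 : ∀ m, 0 ≤ bnd m := by
      intro m
      have h1 : 0 ≤ Real.sqrt 2 * (C:ℝ) * ((N:ℝ) * K m) :=
        mul_nonneg (by positivity) (mul_nonneg (Nat.cast_nonneg N) (hK0 m))
      have h2 : 0 ≤ (C:ℝ) * K m := mul_nonneg (NNReal.coe_nonneg C) (hK0 m)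
      have h3 : 0 ≤ |ψ m 0| := abs_nonneg _
      rw [hbnd]
      dsimp only
      linarith
    have hstep : ∀ (ε : Fin M → Bool) (ε' : Fin M → Fin N → Bool),
        (2:ℝ)⁻¹ * ∑ b : Bool, Sk (Function.update ε kf b) ε'
          ≤ ((2:ℝ)^N)⁻¹ * ∑ w : Fin N → Bool, Sk1 ε (Function.update ε' kf w) := by
      intro ε ε'
      set a : (X → EuclideanSpace ℝ (Fin N)) → ℝ := fun h =>
        ∑ m ∈ Finset.univ.erase kf, Fterm x C ψ k ε ε' m h with ha
      have hrw1 : ∀ b : Bool, Sk (Function.update ε kf b) ε'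
          = sSup ((fun h => a h + sgn b * ψ kf (h (x kf))) '' H) := by
        intro b
        rw [hSk]
        dsimp only
        congr 1
        apply congrArg (· '' H)
        funext h
        rw [← Finset.sum_erase_add Finset.univ _ (Finset.mem_univ kf), ha]
        congr 1
        · apply Finset.sum_congr rfl
          intro m hm
          have hmne : m ≠ kf := Finset.ne_of_mem_erase hm
          unfold Fterm
          by_cases hc : (m:ℕ) < k
          · rw [if_pos hc, if_pos hc]
          · rw [if_neg hc, if_neg hc, Function.update_of_ne hmne]
        · unfold Fterm
          rw [if_neg (Nat.lt_irrefl k), Function.update_self]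
      have hrw2 : ∀ w : Fin N → Bool, Sk1 ε (Function.update ε' kf w)
          = sSup ((fun h => a h
              + Real.sqrt 2 * (C:ℝ) * ∑ j, sgn (w j) * (h (x kf)) j) '' H) := by
        intro w
        rw [hSk1]
        dsimp only
        congr 1
        apply congrArg (· '' H)
        funext h
        rw [← Finset.sum_erase_add Finset.univ _ (Finset.mem_univ kf), ha]
        congr 1
        · apply Finset.sum_congr rfl
          intro m hm
          have hmne : m ≠ kf := Finset.ne_of_mem_erase hm
          have hmnek : (m:ℕ) ≠ k := fun hc => hmne (Fin.ext hc)
          unfold Fterm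
          by_cases hc : (m:ℕ) < k
          · rw [if_pos hc, if_pos (Nat.lt_succ_of_lt hc), Function.update_of_ne hmne]
          · rw [if_neg hc, if_neg (by omega : ¬((m:ℕ) < k+1))]
        · unfold Fterm
          rw [if_pos (Nat.lt_succ_self k), Function.update_self]
      have hBa : ∀ h ∈ H, |a h| ≤ ∑ m, bnd m := by
        intro h hh
        rw [ha]
        calc |∑ m ∈ Finset.univ.erase kf, Fterm x C ψ k ε ε' m h|
            ≤ ∑ m ∈ Finset.univ.erase kf, |Fterm x C ψ k ε ε' m h| :=
              Finset.abs_sum_le_sum_abs _ _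
          _ ≤ ∑ m ∈ Finset.univ.erase kf, bnd m :=
              Finset.sum_le_sum fun m _ =>
                Fterm_bound x C ψ k ε ε' m h (hψ m) (K m) (hK m h hh)
          _ ≤ ∑ m, bnd m :=
              Finset.sum_le_sum_of_subset_of_nonneg (Finset.erase_subset _ _)
                (fun m _ _ => hbnd0 m)
      have := stepB H ⟨h0, hh0⟩ a (fun h => h (x kf)) C (ψ kf) (hψ kf)
        (∑ m, bnd m) hBa (K kf) (fun h hh => hK kf h hh)
      rw [show (∑ b : Bool, Sk (Function.update ε kf b) ε')
          = ∑ b : Bool, sSup ((fun h => a h + sgn b * ψ kf (h (x kf))) '' H) from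
          Finset.sum_congr rfl fun b _ => hrw1 b]
      rw [show (∑ w : Fin N → Bool, Sk1 ε (Function.update ε' kf w))
          = ∑ w : Fin N → Bool, sSup ((fun h => a h
              + Real.sqrt 2 * (C:ℝ) * ∑ j, sgn (w j) * (h (x kf)) j) '' H) from
          Finset.sum_congr rfl fun w _ => hrw2 w]
      exact this
    have hsum : ∑ ε : Fin M → Bool, ∑ ε' : Fin M → Fin N → Bool, Sk ε ε'
        ≤ ∑ ε : Fin M → Bool, ∑ ε' : Fin M → Fin N → Bool, Sk1 ε ε' := by
      have hres1 : ∀ ε' : Fin M → Fin N → Bool,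
          ∑ ε : Fin M → Bool, ∑ b : Bool, Sk (Function.update ε kf b) ε'
            = 2 * ∑ ε : Fin M → Bool, Sk ε ε' := by
        intro ε'
        have := resample (fun ε => Sk ε ε') kf
        simpa using this
      have hres2 : ∀ ε : Fin M → Bool,
          ∑ ε' : Fin M → Fin N → Bool, ∑ w : Fin N → Bool, Sk1 ε (Function.update ε' kf w)
            = 2^N * ∑ ε' : Fin M → Fin N → Bool, Sk1 ε ε' := by
        intro ε
        have := resample (fun ε' => Sk1 ε ε') kf
        rw [this]
        norm_num [Fintype.card_fun]
      calc ∑ ε : Fin M → Bool, ∑ ε' : Fin M → Fin N → Bool, Sk ε ε'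
          = ∑ ε' : Fin M → Fin N → Bool, ∑ ε : Fin M → Bool, Sk ε ε' := Finset.sum_comm
        _ = ∑ ε' : Fin M → Fin N → Bool,
              (2:ℝ)⁻¹ * ∑ ε : Fin M → Bool, ∑ b : Bool, Sk (Function.update ε kf b) ε' := by
            apply Finset.sum_congr rfl
            intro ε' _
            rw [hres1 ε']
            ring
        _ = ∑ ε' : Fin M → Fin N → Bool, ∑ ε : Fin M → Bool,
              (2:ℝ)⁻¹ * ∑ b : Bool, Sk (Function.update ε kf b) ε' := by
            simp_rw [Finset.mul_sum]
        _ ≤ ∑ ε' : Fin M → Fin N → Bool, ∑ ε : Fin M → Bool,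
              ((2:ℝ)^N)⁻¹ * ∑ w : Fin N → Bool, Sk1 ε (Function.update ε' kf w) :=
            Finset.sum_le_sum fun ε' _ => Finset.sum_le_sum fun ε _ => hstep ε ε'
        _ = ∑ ε : Fin M → Bool, ∑ ε' : Fin M → Fin N → Bool,
              ((2:ℝ)^N)⁻¹ * ∑ w : Fin N → Bool, Sk1 ε (Function.update ε' kf w) :=
            Finset.sum_comm
        _ = ∑ ε : Fin M → Bool,
              ((2:ℝ)^N)⁻¹ * ∑ ε' : Fin M → Fin N → Bool,
                ∑ w : Fin N → Bool, Sk1 ε (Function.update ε' kf w) := by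
            simp_rw [Finset.mul_sum]
        _ = ∑ ε : Fin M → Bool,
              ((2:ℝ)^N)⁻¹ * ((2:ℝ)^N * ∑ ε' : Fin M → Fin N → Bool, Sk1 ε ε') := by
            simp_rw [hres2]
        _ = ∑ ε : Fin M → Bool, ∑ ε' : Fin M → Fin N → Bool, Sk1 ε ε' := by
            apply Finset.sum_congr rfl
            intro ε _
            rw [inv_mul_cancel_left₀ (ne_of_gt (by positivity : (0:ℝ) < 2^N))]
    have hpos1 : (0:ℝ) ≤ ((2:ℝ)^M)⁻¹ := by positivity
    have hpos2 : (0:ℝ) ≤ ((2:ℝ)^(M*N))⁻¹ := by positivity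
    exact mul_le_mul_of_nonneg_left (mul_le_mul_of_nonneg_left hsum hpos2) hpos1

end Main

set_option maxHeartbeats 1000000 in
/-- Vector contraction inequality (Lemma 1, Maurer): for `C`-Lipschitz functions
`ψ_m : ℝ^N → ℝ` (Euclidean norm) and a class `H` of vector-valued functions with bounded
images at the sample points,
`E_ξ[sup_h Σ_m ξ_m ψ_m(h(x_m))] ≤ √2 C E_{ξ'}[sup_h Σ_m Σ_j ξ'_{m,j} (h(x_m))_j]`,
where `ξ` is uniform over `{−1,+1}^M` and `ξ'` uniform over `{−1,+1}^{M×N}`. -/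
theorem vector_contraction_inequality {X : Type*} {M N : ℕ} (x : Fin M → X)
    (H : Set (X → EuclideanSpace ℝ (Fin N))) (hH : H.Nonempty)
    (hbdd : ∀ m, Bornology.IsBounded ((fun h => h (x m)) '' H))
    (C : NNReal) (ψ : Fin M → EuclideanSpace ℝ (Fin N) → ℝ)
    (hψ : ∀ m, LipschitzWith C (ψ m)) :
    (2 ^ M : ℝ)⁻¹ *
        ∑ ε : Fin M → Bool, sSup ((fun h => ∑ m, sgn (ε m) * ψ m (h (x m))) '' H)
      ≤ Real.sqrt 2 * (C : ℝ) *
        ((2 ^ (M * N) : ℝ)⁻¹ *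
          ∑ ε : Fin M → Fin N → Bool,
            sSup ((fun h => ∑ m, ∑ j, sgn (ε m j) * (h (x m)) j) '' H)) := by
  classical
  obtain ⟨h0, hh0⟩ := hH
  choose K hK using fun m => isBounded_iff_forall_norm_le.1 (hbdd m)
  have hK' : ∀ m, ∀ h ∈ H, ‖h (x m)‖ ≤ K m := fun m h hh => hK m _ ⟨h, hh, rfl⟩
  have hK0 : ∀ m, 0 ≤ K m := fun m => (norm_nonneg _).trans (hK' m h0 hh0)
  -- cardinality facts
  have hcard1 : ((Finset.univ : Finset (Fin M → Fin N → Bool)).card : ℝ) = 2^(M*N) := by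
    rw [Finset.card_univ, Fintype.card_fun, Fintype.card_fun]
    push_cast
    rw [Fintype.card_bool, Fintype.card_fin, Fintype.card_fin, ← pow_mul, Nat.mul_comm]
    norm_num
  have hcard2 : ((Finset.univ : Finset (Fin M → Bool)).card : ℝ) = 2^M := by
    rw [Finset.card_univ, Fintype.card_fun]
    push_cast
    rw [Fintype.card_bool, Fintype.card_fin]
    norm_num
  have h2MN : ((2:ℝ)^(M*N)) ≠ 0 := by positivity
  have h2M : ((2:ℝ)^M) ≠ 0 := by positivity
  -- G at 0 is the LHS
  have hG0 : Gval x H C ψ 0 = (2 ^ M : ℝ)⁻¹ *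
      ∑ ε : Fin M → Bool, sSup ((fun h => ∑ m, sgn (ε m) * ψ m (h (x m))) '' H) := by
    unfold Gval
    have hF0 : ∀ (ε : Fin M → Bool) (ε' : Fin M → Fin N → Bool) (m : Fin M)
        (h : X → EuclideanSpace ℝ (Fin N)),
        Fterm x C ψ 0 ε ε' m h = sgn (ε m) * ψ m (h (x m)) := by
      intro ε ε' m h
      unfold Fterm
      rw [if_neg (Nat.not_lt_zero _)]
    simp_rw [hF0]
    congr 1
    rw [show (∑ ε : Fin M → Bool, ∑ _ε' : Fin M → Fin N → Bool,
        sSup ((fun h => ∑ m, sgn (ε m) * ψ m (h (x m))) '' H))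
        = ∑ ε : Fin M → Bool, (2:ℝ)^(M*N) *
            sSup ((fun h => ∑ m, sgn (ε m) * ψ m (h (x m))) '' H) from
      Finset.sum_congr rfl fun ε _ => by
        rw [Finset.sum_const, nsmul_eq_mul, hcard1]]
    rw [← Finset.mul_sum, inv_mul_cancel_left₀ h2MN]
  -- G at M is the RHS
  have hGM : Gval x H C ψ M = Real.sqrt 2 * (C : ℝ) *
      ((2 ^ (M * N) : ℝ)⁻¹ *
        ∑ ε : Fin M → Fin N → Bool,
          sSup ((fun h => ∑ m, ∑ j, sgn (ε m j) * (h (x m)) j) '' H)) := by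
    unfold Gval
    have hFM : ∀ (ε : Fin M → Bool) (ε' : Fin M → Fin N → Bool) (m : Fin M)
        (h : X → EuclideanSpace ℝ (Fin N)),
        Fterm x C ψ M ε ε' m h
          = Real.sqrt 2 * (C:ℝ) * ∑ j, sgn (ε' m j) * (h (x m)) j := by
      intro ε ε' m h
      unfold Fterm
      rw [if_pos m.isLt]
    simp_rw [hFM]
    have hsup : ∀ ε' : Fin M → Fin N → Bool,
        sSup ((fun h => ∑ m, Real.sqrt 2 * (C:ℝ) * ∑ j, sgn (ε' m j) * (h (x m)) j) '' H)
          = Real.sqrt 2 * (C:ℝ) *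
            sSup ((fun h => ∑ m, ∑ j, sgn (ε' m j) * (h (x m)) j) '' H) := by
      intro ε'
      have he : (fun h : X → EuclideanSpace ℝ (Fin N) =>
          ∑ m, Real.sqrt 2 * (C:ℝ) * ∑ j, sgn (ε' m j) * (h (x m)) j)
          = fun h => Real.sqrt 2 * (C:ℝ) * ∑ m, ∑ j, sgn (ε' m j) * (h (x m)) j := by
        funext h
        rw [Finset.mul_sum]
      rw [he]
      apply csSup_image_mul H ⟨h0, hh0⟩ _ _ (by positivity) (∑ m, (N:ℝ) * K m)
      intro h hh
      apply Finset.sum_le_sum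
      intro m _
      calc ∑ j, sgn (ε' m j) * (h (x m)) j ≤ |∑ j, sgn (ε' m j) * (h (x m)) j| :=
            le_abs_self _
        _ ≤ ∑ j, |sgn (ε' m j) * (h (x m)) j| := Finset.abs_sum_le_sum_abs _ _
        _ = ∑ j, |(h (x m)) j| := by
            apply Finset.sum_congr rfl
            intro j _
            rw [abs_mul, abs_sgn, one_mul]
        _ ≤ ∑ _j : Fin N, K m := Finset.sum_le_sum fun j _ =>
            le_trans (coord_le_norm (h (x m)) j) (hK' m h hh)
        _ = (N:ℝ) * K m := by rw [Finset.sum_const, nsmul_eq_mul]; norm_num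
    simp_rw [hsup]
    rw [Finset.sum_const, nsmul_eq_mul, hcard2]
    rw [← Finset.mul_sum]
    field_simp
  -- monotonicity chain
  have hmono : ∀ k : ℕ, Gval x H C ψ 0 ≤ Gval x H C ψ k := by
    intro k
    induction k with
    | zero => exact le_rfl
    | succ n ih => exact ih.trans (step_G x H ⟨h0, hh0⟩ C ψ hψ K hK' n)
  calc (2 ^ M : ℝ)⁻¹ *
        ∑ ε : Fin M → Bool, sSup ((fun h => ∑ m, sgn (ε m) * ψ m (h (x m))) '' H)
      = Gval x H C ψ 0 := hG0.symm
    _ ≤ Gval x H C ψ M := hmono M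
    _ = _ := hGM
end

section
/- Coordinatewise decomposition of the Rademacher complexity of a Lipschitz-composed vector-valued class (equation (28)): let X be a set, x₁, …, x_M ∈ X, let H be a nonempty set of functions from X to ℝ^N such that for each m the set {h(x_m) : h ∈ H} ⊆ ℝ^N is bounded, and for each m let ψ_m : ℝ^N → ℝ be C-Lipschitz with respect to the Euclidean norm. Then E_ξ[ sup_{h ∈ H} Σ_{m=1}^M ξ_m ψ_m(h(x_m)) ] ≤ √2 · C · Σ_{j=1}^N E_ξ[ sup_{h ∈ H} Σ_{m=1}^M ξ_m (h(x_m))_j ], where ξ is uniform over {−1,+1}^M in each expectation. -/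
namespace Rad
open Finset

lemma sgn_mul_self (b : Bool) : sgn b * sgn b = 1 := by cases b <;> simp [sgn]
lemma sgn_not (b : Bool) : sgn (!b) = - sgn b := by cases b <;> simp [sgn]
lemma abs_sgn (b : Bool) : |sgn b| = 1 := by cases b <;> simp [sgn]

variable {n : ℕ}

/-- Walsh character. -/
noncomputable def chi (A : Finset (Fin n)) (ε : Fin n → Bool) : ℝ := ∏ i ∈ A, sgn (ε i)

lemma sum_prod_bool (y : Fin n → Bool → ℝ) :
    ∑ ε : Fin n → Bool, ∏ i, y i (ε i) = ∏ i, (y i true + y i false) := by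
  have h := Finset.prod_univ_sum (fun _ : Fin n => (Finset.univ : Finset Bool)) y
  simp only [Fintype.piFinset_univ] at h
  rw [← h]
  exact Finset.prod_congr rfl fun i _ => by simp [Fintype.sum_bool]

/-- Orthogonality of Walsh characters. -/
lemma sum_chi_mul_chi (A B : Finset (Fin n)) :
    ∑ ε : Fin n → Bool, chi A ε * chi B ε = if A = B then (2 ^ n : ℝ) else 0 := by
  have key : ∀ ε : Fin n → Bool, chi A ε * chi B ε
      = ∏ i, ((if i ∈ A then sgn (ε i) else 1) * (if i ∈ B then sgn (ε i) else 1)) := by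
    intro ε
    rw [Finset.prod_mul_distrib]
    congr 1 <;> rw [Finset.prod_ite_mem] <;> simp [chi, Finset.inter_comm]
  simp only [key]
  rw [sum_prod_bool (fun i b => (if i ∈ A then sgn b else 1) * (if i ∈ B then sgn b else 1))]
  by_cases hAB : A = B
  · subst hAB
    rw [if_pos rfl, show (2:ℝ)^n = ∏ _i : Fin n, (2:ℝ) by simp]
    refine Finset.prod_congr rfl fun i _ => ?_
    by_cases h : i ∈ A <;> simp [h, sgn] <;> norm_num
  · rw [if_neg hAB]
    have hex : ∃ i : Fin n, (i ∈ A ∧ i ∉ B) ∨ (i ∈ B ∧ i ∉ A) := by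
      by_contra hcon
      push_neg at hcon
      apply hAB
      ext i
      have := hcon i
      tauto
    obtain ⟨i, hi⟩ := hex
    apply Finset.prod_eq_zero (Finset.mem_univ i)
    rcases hi with ⟨h1, h2⟩ | ⟨h1, h2⟩ <;> simp [h1, h2, sgn]

/-- Completeness kernel: `∑_A χ_A(ε) χ_A(ε') = 2^n δ_{ε,ε'}`. -/
lemma sum_chi_chi (ε ε' : Fin n → Bool) :
    ∑ A : Finset (Fin n), chi A ε * chi A ε' = if ε = ε' then (2 ^ n : ℝ) else 0 := by
  have key : ∀ A : Finset (Fin n), chi A ε * chi A ε'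
      = ∏ i ∈ A, (sgn (ε i) * sgn (ε' i)) := by
    intro A; rw [Finset.prod_mul_distrib]; rfl
  simp only [key]
  have hpow : ∑ A : Finset (Fin n), ∏ i ∈ A, (sgn (ε i) * sgn (ε' i))
      = ∏ i, (sgn (ε i) * sgn (ε' i) + 1) := by
    rw [Finset.prod_add]
    rw [← Finset.powerset_univ]
    exact (Finset.sum_congr rfl fun A _ => by simp).symm
  rw [hpow]
  by_cases h : ε = ε'
  · subst h
    rw [if_pos rfl, show (2:ℝ)^n = ∏ _i : Fin n, (2:ℝ) by simp]
    exact Finset.prod_congr rfl fun i _ => by cases (ε i) <;> norm_num [sgn]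
  · rw [if_neg h]
    have hex : ∃ i, ε i ≠ ε' i := by
      by_contra hcon; push_neg at hcon; exact h (funext hcon)
    obtain ⟨i, hi⟩ := hex
    apply Finset.prod_eq_zero (Finset.mem_univ i)
    cases hε : ε i <;> cases hε' : ε' i <;> simp_all [sgn]

/-- (Unnormalized) Fourier coefficient. -/
noncomputable def fhat (f : (Fin n → Bool) → ℝ) (A : Finset (Fin n)) : ℝ :=
  ∑ ε : Fin n → Bool, f ε * chi A ε

/-- Fourier inversion. -/
lemma inversion (f : (Fin n → Bool) → ℝ) (ε : Fin n → Bool) :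
    ∑ A : Finset (Fin n), fhat f A * chi A ε = (2 ^ n : ℝ) * f ε := by
  simp only [fhat, Finset.sum_mul]
  rw [Finset.sum_comm]
  have : ∀ ε' : Fin n → Bool, ∑ A : Finset (Fin n), f ε' * chi A ε' * chi A ε
      = f ε' * (if ε' = ε then (2 ^ n : ℝ) else 0) := by
    intro ε'
    rw [← sum_chi_chi ε' ε, Finset.mul_sum]
    exact Finset.sum_congr rfl fun A _ => by ring
  simp only [this, mul_ite, mul_zero]
  rw [Finset.sum_ite_eq' Finset.univ ε (fun x => f x * 2 ^ n)]
  simp [mul_comm]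

/-- Parseval/Plancherel for two functions. -/
lemma parseval (f g : (Fin n → Bool) → ℝ) :
    (2 ^ n : ℝ) * ∑ ε : Fin n → Bool, f ε * g ε = ∑ A : Finset (Fin n), fhat f A * fhat g A := by
  have : ∀ ε : Fin n → Bool, (2 ^ n : ℝ) * (f ε * g ε) = f ε * ((2 ^ n : ℝ) * g ε) := by
    intro ε; ring
  rw [Finset.mul_sum]
  simp only [this]
  have h2 : ∀ ε, f ε * ((2 ^ n : ℝ) * g ε) = ∑ A : Finset (Fin n), fhat g A * (f ε * chi A ε) := by
    intro ε
    rw [← inversion g ε, Finset.mul_sum]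
    exact Finset.sum_congr rfl fun A _ => by ring
  simp only [h2]
  rw [Finset.sum_comm]
  exact Finset.sum_congr rfl fun A _ => by rw [← Finset.mul_sum, ← fhat]; ring

/-- Flip the `i`-th coordinate. -/
def flip (i : Fin n) (ε : Fin n → Bool) : Fin n → Bool := Function.update ε i (!ε i)

lemma flip_invol (i : Fin n) : Function.Involutive (flip i) := by
  intro ε
  funext j
  by_cases h : j = i
  · subst h; simp [flip, Function.update]
  · simp [flip, Function.update_of_ne h]

lemma sum_comp_flip (i : Fin n) (g : (Fin n → Bool) → ℝ) :
    ∑ ε : Fin n → Bool, g (flip i ε) = ∑ ε : Fin n → Bool, g ε :=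
  Function.Bijective.sum_comp (flip_invol i).bijective g

lemma chi_flip (A : Finset (Fin n)) (i : Fin n) (ε : Fin n → Bool) :
    chi A (flip i ε) = (if i ∈ A then -1 else 1) * chi A ε := by
  by_cases h : i ∈ A
  · rw [if_pos h, chi, chi, ← Finset.mul_prod_erase A _ h, ← Finset.mul_prod_erase A _ h]
    have h1 : flip i ε i = !ε i := by simp [flip]
    have h2 : ∀ j ∈ A.erase i, sgn (flip i ε j) = sgn (ε j) := by
      intro j hj
      rw [flip, Function.update_of_ne (Finset.ne_of_mem_erase hj)]
    rw [Finset.prod_congr rfl h2, h1, sgn_not]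
    ring
  · rw [if_neg h, one_mul, chi, chi]
    refine Finset.prod_congr rfl fun j hj => ?_
    have : j ≠ i := fun hji => h (hji ▸ hj)
    rw [flip, Function.update_of_ne this]

lemma fhat_comp_flip (f : (Fin n → Bool) → ℝ) (i : Fin n) (A : Finset (Fin n)) :
    fhat (fun ε => f (flip i ε)) A = (if i ∈ A then -1 else 1) * fhat f A := by
  rw [fhat, fhat, Finset.mul_sum]
  have step : ∀ ε : Fin n → Bool, f (flip i ε) * chi A ε
      = (fun ε' => (if i ∈ A then (-1:ℝ) else 1) * (f ε' * chi A ε')) (flip i ε) := by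
    intro ε
    simp only []
    rw [chi_flip]
    by_cases h : i ∈ A <;> simp [h] <;> ring
  simp only [step]
  rw [sum_comp_flip i (fun ε' => (if i ∈ A then (-1:ℝ) else 1) * (f ε' * chi A ε'))]

/-- Global negation. -/
lemma sum_comp_neg (g : (Fin n → Bool) → ℝ) :
    ∑ ε : Fin n → Bool, g (fun i => !ε i) = ∑ ε : Fin n → Bool, g ε := by
  have hinv : Function.Involutive (fun (ε : Fin n → Bool) => (fun i => !ε i)) := by
    intro ε; funext i; simp
  exact Function.Bijective.sum_comp hinv.bijective g

lemma chi_neg (A : Finset (Fin n)) (ε : Fin n → Bool) :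
    chi A (fun i => !ε i) = (-1 : ℝ) ^ A.card * chi A ε := by
  rw [chi, chi]
  have : ∀ i ∈ A, sgn (!ε i) = -1 * sgn (ε i) := fun i _ => by rw [sgn_not]; ring
  rw [Finset.prod_congr rfl this, Finset.prod_mul_distrib, Finset.prod_const]

/-- Fourier coefficients of an even function vanish on odd sets. -/
lemma fhat_even_odd_vanish (f : (Fin n → Bool) → ℝ)
    (hf : ∀ ε, f (fun i => !ε i) = f ε) (A : Finset (Fin n)) (hA : ¬ Even A.card) :
    fhat f A = 0 := by
  have key : fhat f A = (-1 : ℝ) ^ A.card * fhat f A := by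
    conv_lhs => rw [fhat, ← sum_comp_neg (fun ε => f ε * chi A ε)]
    simp only [hf, chi_neg]
    rw [fhat, Finset.mul_sum]
    exact Finset.sum_congr rfl fun ε _ => by ring
  rw [Odd.neg_one_pow (Nat.not_even_iff_odd.mp hA)] at key
  linarith

lemma fhat_L (f : (Fin n → Bool) → ℝ) (A : Finset (Fin n)) :
    fhat (fun ε => (1/2) * ∑ i, (f ε - f (flip i ε))) A = (A.card : ℝ) * fhat f A := by
  have expand : ∀ ε, ((1/2) * ∑ i, (f ε - f (flip i ε))) * chi A ε
      = (1/2) * ∑ i, (f ε * chi A ε - f (flip i ε) * chi A ε) := by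
    intro ε; rw [Finset.mul_sum, Finset.mul_sum, Finset.sum_mul]
    exact Finset.sum_congr rfl fun i _ => by ring
  rw [fhat]
  simp only [expand]
  rw [← Finset.mul_sum, Finset.sum_comm]
  have inner : ∀ i : Fin n, ∑ ε : Fin n → Bool, (f ε * chi A ε - f (flip i ε) * chi A ε)
      = fhat f A - (if i ∈ A then -1 else 1) * fhat f A := by
    intro i
    rw [Finset.sum_sub_distrib, ← fhat, ← fhat, fhat_comp_flip]
  simp only [inner]
  have : ∀ i : Fin n, fhat f A - (if i ∈ A then (-1:ℝ) else 1) * fhat f A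
      = if i ∈ A then 2 * fhat f A else 0 := by
    intro i; by_cases h : i ∈ A <;> simp [h] <;> ring
  simp only [this]
  rw [Finset.sum_ite_mem, Finset.univ_inter, Finset.sum_const, nsmul_eq_mul]
  ring

/-- Latała–Oleszkiewicz: for an even nonnegative `f` with `Lf ≤ f`, `E f² ≤ 2 (E f)²`. -/
lemma LO_bound (f : (Fin n → Bool) → ℝ) (hf0 : ∀ ε, 0 ≤ f ε)
    (heven : ∀ ε, f (fun i => !ε i) = f ε)
    (hL : ∀ ε, (1/2) * ∑ i, (f ε - f (flip i ε)) ≤ f ε) :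
    (2 ^ n : ℝ) * ∑ ε : Fin n → Bool, (f ε)^2 ≤ 2 * (∑ ε : Fin n → Bool, f ε)^2 := by
  have hpar : (2 ^ n : ℝ) * ∑ ε : Fin n → Bool, (f ε)^2
      = ∑ A : Finset (Fin n), (fhat f A)^2 := by
    have := parseval f f
    simp only [← sq] at this
    exact this
  have hcard : ∑ A : Finset (Fin n), (A.card : ℝ) * (fhat f A)^2
      ≤ ∑ A : Finset (Fin n), (fhat f A)^2 := by
    have h1 : ∑ A : Finset (Fin n), (A.card : ℝ) * (fhat f A)^2
        = (2 ^ n : ℝ) * ∑ ε : Fin n → Bool, f ε * ((1/2) * ∑ i, (f ε - f (flip i ε))) := by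
      rw [parseval f (fun ε => (1/2) * ∑ i, (f ε - f (flip i ε)))]
      exact Finset.sum_congr rfl fun A _ => by rw [fhat_L]; ring
    rw [h1, ← hpar]
    have : ∀ ε : Fin n → Bool, f ε * ((1/2) * ∑ i, (f ε - f (flip i ε))) ≤ (f ε)^2 := by
      intro ε
      rw [sq]
      exact mul_le_mul_of_nonneg_left (hL ε) (hf0 ε)
    refine mul_le_mul_of_nonneg_left (Finset.sum_le_sum fun ε _ => this ε) (by positivity)
  have hlow : ∀ A : Finset (Fin n),
      2 * (fhat f A)^2 - 2 * (if A = (∅ : Finset (Fin n)) then (fhat f ∅)^2 else 0)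
      ≤ (A.card : ℝ) * (fhat f A)^2 := by
    intro A
    by_cases hA : A = ∅
    · subst hA; simp
    · rw [if_neg hA, mul_zero, sub_zero]
      by_cases he : Even A.card
      · have h2 : 2 ≤ (A.card : ℝ) := by
          have : A.card ≠ 0 := fun h => hA (Finset.card_eq_zero.mp h)
          have h1 : 1 ≤ A.card := Nat.one_le_iff_ne_zero.mpr this
          have : 2 ≤ A.card := by
            rcases he with ⟨k, hk⟩
            omega
          exact_mod_cast this
        nlinarith [sq_nonneg (fhat f A)]
      · rw [fhat_even_odd_vanish f heven A he]
        simp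
  have hsum := Finset.sum_le_sum fun A (_ : A ∈ Finset.univ) => hlow A
  rw [Finset.sum_sub_distrib] at hsum
  have hone : ∑ A : Finset (Fin n), (2:ℝ) * (if A = (∅ : Finset (Fin n)) then (fhat f ∅)^2 else 0)
      = 2 * (fhat f ∅)^2 := by
    simp only [mul_ite, mul_zero]
    rw [Finset.sum_ite_eq' Finset.univ (∅ : Finset (Fin n)) (fun _ => 2 * (fhat f ∅)^2)]
    simp
  rw [hone, ← Finset.mul_sum] at hsum
  have hmean : fhat f ∅ = ∑ ε : Fin n → Bool, f ε := by
    rw [fhat]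
    exact Finset.sum_congr rfl fun ε _ => by simp [chi]
  rw [hpar]
  rw [hmean] at hsum
  linarith

/-- Szarek's sharp Khintchine inequality: `E|Σ εᵢ cᵢ| ≥ ‖c‖₂ / √2`. -/
lemma szarek (c : Fin n → ℝ) :
    Real.sqrt (∑ i, (c i)^2)
      ≤ Real.sqrt 2 * ((2 ^ n : ℝ)⁻¹ * ∑ ε : Fin n → Bool, |∑ i, sgn (ε i) * c i|) := by
  set S : (Fin n → Bool) → ℝ := fun ε => ∑ i, sgn (ε i) * c i with hS
  set f : (Fin n → Bool) → ℝ := fun ε => |S ε| with hf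
  have hf0 : ∀ ε, 0 ≤ f ε := fun ε => abs_nonneg _
  have heven : ∀ ε, f (fun i => !ε i) = f ε := by
    intro ε
    have : S (fun i => !ε i) = - S ε := by
      rw [hS]
      simp only
      rw [← Finset.sum_neg_distrib]
      exact Finset.sum_congr rfl fun i _ => by rw [sgn_not]; ring
    rw [hf]
    simp only
    rw [this, abs_neg]
  have hSflip : ∀ (i : Fin n) (ε), S (flip i ε) = S ε - 2 * (sgn (ε i) * c i) := by
    intro i ε
    have hterm : ∀ k : Fin n, sgn (flip i ε k) * c k
        = sgn (ε k) * c k - (if k = i then 2 * (sgn (ε i) * c i) else 0) := by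
      intro k
      by_cases h : k = i
      · subst h
        simp only [if_pos rfl, flip, Function.update_self, sgn_not]
        by_cases hb : ε k = true <;> simp [hb, sgn] <;> ring
      · simp [flip, Function.update_of_ne h, if_neg h]
    calc S (flip i ε) = ∑ k, (sgn (ε k) * c k - (if k = i then 2 * (sgn (ε i) * c i) else 0)) :=
          Finset.sum_congr rfl fun k _ => hterm k
      _ = S ε - 2 * (sgn (ε i) * c i) := by
          rw [Finset.sum_sub_distrib, Finset.sum_ite_eq' Finset.univ i
            (fun _ => 2 * (sgn (ε i) * c i))]
          simp [hS]
  have hL : ∀ ε, (1/2) * ∑ i, (f ε - f (flip i ε)) ≤ f ε := by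
    intro ε
    have hsumflip : ∑ i, S (flip i ε) = ((n : ℝ) - 2) * S ε := by
      simp only [hSflip]
      rw [Finset.sum_sub_distrib, Finset.sum_const, ← Finset.mul_sum]
      simp [hS]
      ring
    have habs : ((n : ℝ) - 2) * f ε ≤ ∑ i, f (flip i ε) := by
      calc ((n : ℝ) - 2) * f ε ≤ |(n : ℝ) - 2| * |S ε| :=
            mul_le_mul_of_nonneg_right (le_abs_self _) (abs_nonneg _)
        _ = |((n : ℝ) - 2) * S ε| := (abs_mul _ _).symm
        _ = |∑ i, S (flip i ε)| := by rw [hsumflip]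
        _ ≤ ∑ i, |S (flip i ε)| := Finset.abs_sum_le_sum_abs _ _
        _ = ∑ i, f (flip i ε) := rfl
    have hexp : ∑ i, (f ε - f (flip i ε)) = (n : ℝ) * f ε - ∑ i, f (flip i ε) := by
      rw [Finset.sum_sub_distrib, Finset.sum_const]
      simp [nsmul_eq_mul]
    rw [hexp]
    linarith
  have horth : ∀ i k : Fin n, ∑ ε : Fin n → Bool, sgn (ε i) * sgn (ε k)
      = if i = k then (2 ^ n : ℝ) else 0 := by
    intro i k
    have := sum_chi_mul_chi ({i} : Finset (Fin n)) {k}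
    simp only [chi, Finset.prod_singleton] at this
    rw [this]
    by_cases h : i = k
    · simp [h]
    · rw [if_neg h, if_neg (fun hc => h (Finset.singleton_injective hc))]
  have hE2 : ∑ ε : Fin n → Bool, (f ε)^2 = (2 ^ n : ℝ) * ∑ i, (c i)^2 := by
    have h1 : ∀ ε, (f ε)^2 = ∑ i, ∑ k, (c i * c k) * (sgn (ε i) * sgn (ε k)) := by
      intro ε
      rw [hf]
      simp only [sq_abs]
      rw [hS, sq]
      simp only
      rw [Finset.sum_mul_sum]
      exact Finset.sum_congr rfl fun i _ => Finset.sum_congr rfl fun k _ => by ring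
    simp only [h1]
    rw [Finset.sum_comm]
    have h2 : ∀ i : Fin n, ∑ ε : Fin n → Bool, ∑ k, (c i * c k) * (sgn (ε i) * sgn (ε k))
        = (2 ^ n : ℝ) * (c i)^2 := by
      intro i
      rw [Finset.sum_comm]
      have h3 : ∀ k : Fin n, ∑ ε : Fin n → Bool, (c i * c k) * (sgn (ε i) * sgn (ε k))
          = if k = i then (2 ^ n : ℝ) * (c i)^2 else 0 := by
        intro k
        rw [← Finset.mul_sum, horth i k]
        by_cases h : i = k
        · subst h; simp; ring
        · rw [if_neg h, if_neg (Ne.symm h), mul_zero]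
      simp only [h3]
      rw [Finset.sum_ite_eq' Finset.univ i (fun _ => (2 ^ n : ℝ) * (c i)^2)]
      simp
    simp only [h2]
    rw [← Finset.mul_sum]
  have hLO := LO_bound f hf0 heven hL
  rw [hE2] at hLO
  set T : ℝ := ∑ ε : Fin n → Bool, f ε with hT
  have hT0 : 0 ≤ T := Finset.sum_nonneg fun ε _ => hf0 ε
  have h4 : ((2:ℝ)^n)^2 * ∑ i, (c i)^2 ≤ 2 * T^2 := by
    have : ((2:ℝ)^n)^2 * ∑ i, (c i)^2 = (2^n : ℝ) * ((2 ^ n : ℝ) * ∑ i, (c i)^2) := by ring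
    rw [this]
    exact hLO
  have h5 := Real.sqrt_le_sqrt h4
  rw [Real.sqrt_mul (sq_nonneg _), Real.sqrt_sq (by positivity : (0:ℝ) ≤ (2:ℝ)^n),
    Real.sqrt_mul (by norm_num : (0:ℝ) ≤ 2), Real.sqrt_sq hT0] at h5
  have hp : (0:ℝ) < 2^n := by positivity
  calc Real.sqrt (∑ i, (c i)^2) = (2^n * Real.sqrt (∑ i, (c i)^2))/2^n := by field_simp
    _ ≤ (Real.sqrt 2 * T)/2^n := by gcongr
    _ = Real.sqrt 2 * ((2^n : ℝ)⁻¹ * T) := by ring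

end Rad

namespace Rad

variable {ι : Type*} [Nonempty ι] {N : ℕ}

/-- One step of Maurer's vector contraction argument. -/
lemma step (C : NNReal) (ψ : EuclideanSpace ℝ (Fin N) → ℝ) (hψ : LipschitzWith C ψ)
    (A : ι → ℝ) (w : ι → EuclideanSpace ℝ (Fin N))
    (BA : ℝ) (hBA : ∀ h, |A h| ≤ BA) (Bw : ℝ) (hBw : ∀ h j, |w h j| ≤ Bw) :
    (1/2) * ((⨆ h, (A h + ψ (w h))) + (⨆ h, (A h - ψ (w h))))
      ≤ (2 ^ N : ℝ)⁻¹ * ∑ τ : Fin N → Bool,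
          ⨆ h, (A h + Real.sqrt 2 * (C : ℝ) * ∑ j, sgn (τ j) * w h j) := by
  set K : ℝ := Real.sqrt 2 * (C : ℝ) with hK
  have hK0 : 0 ≤ K := mul_nonneg (Real.sqrt_nonneg 2) C.coe_nonneg
  have hsum_bound : ∀ (h : ι) (τ : Fin N → Bool), |∑ j, sgn (τ j) * w h j| ≤ (N : ℝ) * Bw := by
    intro h τ
    calc |∑ j, sgn (τ j) * w h j| ≤ ∑ j, |sgn (τ j) * w h j| := Finset.abs_sum_le_sum_abs _ _
      _ ≤ ∑ _j : Fin N, Bw := Finset.sum_le_sum fun j _ => by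
          rw [abs_mul, abs_sgn, one_mul]; exact hBw h j
      _ = (N : ℝ) * Bw := by simp [mul_comm]
  have bddR : ∀ τ : Fin N → Bool,
      BddAbove (Set.range fun h => A h + K * ∑ j, sgn (τ j) * w h j) := by
    intro τ
    refine ⟨BA + K * ((N : ℝ) * Bw), ?_⟩
    rintro y ⟨h, rfl⟩
    have h1 : A h ≤ BA := (abs_le.mp (hBA h)).2
    have h2 : K * ∑ j, sgn (τ j) * w h j ≤ K * ((N : ℝ) * Bw) :=
      mul_le_mul_of_nonneg_left (le_trans (le_abs_self _) (hsum_bound h τ)) hK0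
    exact add_le_add h1 h2
  set R : ℝ := ∑ τ : Fin N → Bool, ⨆ h, (A h + K * ∑ j, sgn (τ j) * w h j) with hR
  have key : ∀ h h' : ι, (A h + ψ (w h)) + (A h' - ψ (w h')) ≤ 2 * ((2 ^ N : ℝ)⁻¹ * R) := by
    intro h h'
    set u : Fin N → ℝ := fun j => w h j - w h' j with hu
    have hLip : ψ (w h) - ψ (w h') ≤ (C : ℝ) * Real.sqrt (∑ j, (u j)^2) := by
      have hd := hψ.dist_le_mul (w h) (w h')
      have hdist : dist (w h) (w h') = Real.sqrt (∑ j, (u j)^2) := by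
        rw [EuclideanSpace.dist_eq]
        congr 1
        exact Finset.sum_congr rfl fun j _ => by rw [Real.dist_eq, sq_abs]
      calc ψ (w h) - ψ (w h') ≤ |ψ (w h) - ψ (w h')| := le_abs_self _
        _ = dist (ψ (w h)) (ψ (w h')) := (Real.dist_eq _ _).symm
        _ ≤ (C : ℝ) * dist (w h) (w h') := hd
        _ = (C : ℝ) * Real.sqrt (∑ j, (u j)^2) := by rw [hdist]
    have hSz := szarek u
    have hpair : ∀ τ : Fin N → Bool,
        (A h + A h') + K * |∑ j, sgn (τ j) * u j|
          ≤ (⨆ h'', (A h'' + K * ∑ j, sgn (τ j) * w h'' j))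
            + (⨆ h'', (A h'' + K * ∑ j, sgn ((fun i => !τ i) j) * w h'' j)) := by
      intro τ
      have hneg : ∀ h'' : ι, ∑ j, sgn ((fun i => !τ i) j) * w h'' j
          = - ∑ j, sgn (τ j) * w h'' j := by
        intro h''
        rw [← Finset.sum_neg_distrib]
        exact Finset.sum_congr rfl fun j _ => by rw [sgn_not]; ring
      have husub : ∑ j, sgn (τ j) * u j
          = (∑ j, sgn (τ j) * w h j) - ∑ j, sgn (τ j) * w h' j := by
        rw [← Finset.sum_sub_distrib]
        exact Finset.sum_congr rfl fun j _ => by rw [hu]; ring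
      have s1 := le_ciSup (bddR τ) h
      have s2 := le_ciSup (bddR (fun i => !τ i)) h'
      have s3 := le_ciSup (bddR τ) h'
      have s4 := le_ciSup (bddR (fun i => !τ i)) h
      rw [hneg h'] at s2
      rw [hneg h] at s4
      rcases abs_cases (∑ j, sgn (τ j) * u j) with ⟨habs, _⟩ | ⟨habs, _⟩
      · rw [habs, husub]
        have expand : K * ((∑ j, sgn (τ j) * w h j) - ∑ j, sgn (τ j) * w h' j)
            = K * (∑ j, sgn (τ j) * w h j) + K * (-∑ j, sgn (τ j) * w h' j) := by ring
        linarith [s1, s2, expand]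
      · rw [habs, husub]
        have expand : K * (-((∑ j, sgn (τ j) * w h j) - ∑ j, sgn (τ j) * w h' j))
            = K * (∑ j, sgn (τ j) * w h' j) + K * (-∑ j, sgn (τ j) * w h j) := by ring
        linarith [s3, s4, expand]
    -- sum the pairing inequality over τ
    have hsum2 : ∑ τ : Fin N → Bool, ((A h + A h') + K * |∑ j, sgn (τ j) * u j|) ≤ 2 * R := by
      have hle := Finset.sum_le_sum fun τ (_ : τ ∈ Finset.univ) => hpair τ
      simp only [Finset.sum_add_distrib] at hle
      have hre : ∑ τ : Fin N → Bool,
          (⨆ h'', (A h'' + K * ∑ j, sgn ((fun i => !τ i) j) * w h'' j)) = R := by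
        rw [hR]
        exact sum_comp_neg (fun τ => ⨆ h'', (A h'' + K * ∑ j, sgn (τ j) * w h'' j))
      rw [hre] at hle
      rw [Finset.sum_add_distrib, Finset.sum_add_distrib]
      linarith
    have hp : (0:ℝ) < 2 ^ N := by positivity
    set Z : ℝ := ∑ τ : Fin N → Bool, |∑ j, sgn (τ j) * u j| with hZ
    have hdistr : ∑ τ : Fin N → Bool, ((A h + A h') + K * |∑ j, sgn (τ j) * u j|)
        = (2 ^ N : ℝ) * (A h + A h') + K * Z := by
      rw [Finset.sum_add_distrib, Finset.sum_const, ← Finset.mul_sum, Finset.card_univ]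
      congr 1
      rw [nsmul_eq_mul]
      congr 1
      rw [Fintype.card_fun]
      push_cast
      simp
    rw [hdistr] at hsum2
    have hsz2 : (C : ℝ) * Real.sqrt (∑ j, (u j)^2) ≤ K * ((2 ^ N : ℝ)⁻¹ * Z) := by
      calc (C : ℝ) * Real.sqrt (∑ j, (u j)^2)
          ≤ (C : ℝ) * (Real.sqrt 2 * ((2 ^ N : ℝ)⁻¹ * Z)) :=
            mul_le_mul_of_nonneg_left hSz C.coe_nonneg
        _ = K * ((2 ^ N : ℝ)⁻¹ * Z) := by rw [hK]; ring
    have hfin : (A h + A h') + K * ((2 ^ N : ℝ)⁻¹ * Z) ≤ 2 * ((2 ^ N : ℝ)⁻¹ * R) := by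
      have h6 := mul_le_mul_of_nonneg_left hsum2 (inv_nonneg.mpr hp.le)
      have h7 : (2 ^ N : ℝ)⁻¹ * ((2 ^ N : ℝ) * (A h + A h') + K * Z)
          = (A h + A h') + K * ((2 ^ N : ℝ)⁻¹ * Z) := by
        field_simp
      rw [h7] at h6
      linarith
    linarith [hLip.trans hsz2]
  -- conclude via two applications of `ciSup_le`
  have final : (⨆ h, (A h + ψ (w h))) + (⨆ h, (A h - ψ (w h)))
      ≤ 2 * ((2 ^ N : ℝ)⁻¹ * R) := by
    have t1 : (⨆ h, (A h + ψ (w h)))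
        ≤ 2 * ((2 ^ N : ℝ)⁻¹ * R) - ⨆ h, (A h - ψ (w h)) := by
      refine ciSup_le fun h => ?_
      have t2 : (⨆ h', (A h' - ψ (w h')))
          ≤ 2 * ((2 ^ N : ℝ)⁻¹ * R) - (A h + ψ (w h)) :=
        ciSup_le fun h' => by linarith [key h h']
      linarith
    linarith
  linarith

end Rad

namespace Rad

/-- Splitting a sum over functions at one coordinate. -/
lemma sum_update_split {α β : Type*} [Fintype α] [Fintype β] [DecidableEq α]
    (i : α) (g : (α → β) → ℝ) :
    (Fintype.card β : ℝ) * ∑ p : α → β, g p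
      = ∑ b : β, ∑ p : α → β, g (Function.update p i b) := by
  classical
  set e := Equiv.piSplitAt i (fun _ : α => β) with he
  have hupd : ∀ (b b' : β) (ρ : {j // j ≠ i} → β),
      Function.update (e.symm (b', ρ)) i b = e.symm (b, ρ) := by
    intro b b' ρ
    funext j
    by_cases hj : j = i
    · subst hj
      rw [Function.update_self]
      simp [he, Equiv.piSplitAt_symm_apply]
    · rw [Function.update_of_ne hj]
      simp [he, Equiv.piSplitAt_symm_apply, hj]
  have hfixed : ∀ b : β, ∑ p : α → β, g (Function.update p i b)
      = (Fintype.card β : ℝ) * ∑ ρ : {j // j ≠ i} → β, g (e.symm (b, ρ)) := by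
    intro b
    rw [← Equiv.sum_comp e.symm (fun p => g (Function.update p i b))]
    rw [Fintype.sum_prod_type]
    have : ∀ (b' : β) (ρ : {j // j ≠ i} → β),
        g (Function.update (e.symm (b', ρ)) i b) = g (e.symm (b, ρ)) := by
      intro b' ρ; rw [hupd]
    simp only [this]
    rw [Finset.sum_const, Finset.card_univ, nsmul_eq_mul]
  simp only [hfixed]
  rw [← Finset.mul_sum]
  congr 1
  rw [← Equiv.sum_comp e.symm g, Fintype.sum_prod_type]

end Rad

namespace Rad

variable {ι : Type*} [Nonempty ι] {M N : ℕ}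

/-- The partially-contracted process. -/
noncomputable def body (K : ℝ) (ψ : Fin M → EuclideanSpace ℝ (Fin N) → ℝ)
    (v : ι → Fin M → EuclideanSpace ℝ (Fin N)) (S : Finset (Fin M))
    (ε : Fin M → Bool) (η : Fin M → Fin N → Bool) (h : ι) : ℝ :=
  ∑ m, if m ∈ S then K * ∑ j, sgn (η m j) * v h m j else sgn (ε m) * ψ m (v h m)

noncomputable def sumsum (K : ℝ) (ψ : Fin M → EuclideanSpace ℝ (Fin N) → ℝ)
    (v : ι → Fin M → EuclideanSpace ℝ (Fin N)) (S : Finset (Fin M)) : ℝ :=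
  ∑ ε : Fin M → Bool, ∑ η : Fin M → Fin N → Bool, ⨆ h, body K ψ v S ε η h

section Main

variable (C : NNReal) (ψ : Fin M → EuclideanSpace ℝ (Fin N) → ℝ)
  (hψ : ∀ m, LipschitzWith C (ψ m))
  (v : ι → Fin M → EuclideanSpace ℝ (Fin N))
  (Bv : ℝ) (hBv0 : 0 ≤ Bv) (hBv : ∀ h m j, |v h m j| ≤ Bv)

/-- Norm bound on the vectors. -/
lemma norm_v_le (h : ι) (m : Fin M) (hBv : ∀ h m j, |v h m j| ≤ Bv) (hBv0 : 0 ≤ Bv) :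
    ‖v h m‖ ≤ Real.sqrt N * Bv := by
  rw [EuclideanSpace.norm_eq]
  have h1 : ∑ j, ‖v h m j‖ ^ 2 ≤ (N : ℝ) * Bv ^ 2 := by
    calc ∑ j, ‖v h m j‖ ^ 2 ≤ ∑ _j : Fin N, Bv ^ 2 := Finset.sum_le_sum fun j _ => by
          have := hBv h m j
          rw [Real.norm_eq_abs]
          nlinarith [abs_nonneg (v h m j)]
      _ = (N : ℝ) * Bv ^ 2 := by rw [Finset.sum_const, Finset.card_univ, nsmul_eq_mul]; simp
  calc Real.sqrt (∑ j, ‖v h m j‖ ^ 2) ≤ Real.sqrt ((N : ℝ) * Bv ^ 2) := Real.sqrt_le_sqrt h1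
    _ = Real.sqrt N * Bv := by
        rw [Real.sqrt_mul (Nat.cast_nonneg N), Real.sqrt_sq hBv0]

/-- Pointwise bound on `ψ m` along the class. -/
lemma psi_bound (m : Fin M) (h : ι) (hψ : ∀ m, LipschitzWith C (ψ m))
    (hBv : ∀ h m j, |v h m j| ≤ Bv) (hBv0 : 0 ≤ Bv) :
    |ψ m (v h m)| ≤ |ψ m 0| + (C : ℝ) * (Real.sqrt N * Bv) := by
  have h1 : |ψ m (v h m) - ψ m 0| ≤ (C : ℝ) * ‖v h m‖ := by
    have := (hψ m).dist_le_mul (v h m) 0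
    rw [Real.dist_eq] at this
    rw [dist_zero_right] at this
    exact this
  have h2 := norm_v_le v Bv h m hBv hBv0
  have h3 : (C : ℝ) * ‖v h m‖ ≤ (C : ℝ) * (Real.sqrt N * Bv) :=
    mul_le_mul_of_nonneg_left h2 C.coe_nonneg
  calc |ψ m (v h m)| ≤ |ψ m (v h m) - ψ m 0| + |ψ m 0| := by
        have := abs_sub_abs_le_abs_sub (ψ m (v h m)) (ψ m 0)
        have h4 := abs_add_le (ψ m (v h m) - ψ m 0) (ψ m 0)
        calc |ψ m (v h m)| = |(ψ m (v h m) - ψ m 0) + ψ m 0| := by ring_nf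
          _ ≤ |ψ m (v h m) - ψ m 0| + |ψ m 0| := abs_add_le _ _
    _ ≤ |ψ m 0| + (C : ℝ) * (Real.sqrt N * Bv) := by linarith

/-- Termwise absolute bound for `body`. -/
lemma body_term_abs (K : ℝ) (hK0 : 0 ≤ K) (hψ : ∀ m, LipschitzWith C (ψ m))
    (hBv0 : 0 ≤ Bv) (hBv : ∀ h m j, |v h m j| ≤ Bv)
    (S : Finset (Fin M)) (ε : Fin M → Bool) (η : Fin M → Fin N → Bool) (h : ι) (m : Fin M) :
    |if m ∈ S then K * ∑ j, sgn (η m j) * v h m j else sgn (ε m) * ψ m (v h m)|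
      ≤ (|ψ m 0| + (C : ℝ) * (Real.sqrt N * Bv)) + K * ((N : ℝ) * Bv) := by
  have hnn1 : 0 ≤ |ψ m 0| + (C : ℝ) * (Real.sqrt N * Bv) := by positivity
  have hnn2 : 0 ≤ K * ((N : ℝ) * Bv) := by positivity
  by_cases hm : m ∈ S
  · rw [if_pos hm, abs_mul, abs_of_nonneg hK0]
    have h1 : |∑ j, sgn (η m j) * v h m j| ≤ (N : ℝ) * Bv := by
      calc |∑ j, sgn (η m j) * v h m j| ≤ ∑ j, |sgn (η m j) * v h m j| :=
            Finset.abs_sum_le_sum_abs _ _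
        _ ≤ ∑ _j : Fin N, Bv := Finset.sum_le_sum fun j _ => by
            rw [abs_mul, abs_sgn, one_mul]; exact hBv h m j
        _ = (N : ℝ) * Bv := by rw [Finset.sum_const, Finset.card_univ, nsmul_eq_mul]; simp
    have := mul_le_mul_of_nonneg_left h1 hK0
    linarith
  · rw [if_neg hm, abs_mul, abs_sgn, one_mul]
    have := psi_bound C ψ v Bv m h hψ hBv hBv0
    linarith

/-- The key monotonicity step: contracting one more coordinate increases `sumsum`. -/
lemma sumsum_le_insert (hψ : ∀ m, LipschitzWith C (ψ m))
    (hBv0 : 0 ≤ Bv) (hBv : ∀ h m j, |v h m j| ≤ Bv)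
    (S : Finset (Fin M)) (m₀ : Fin M) (hm₀ : m₀ ∉ S) :
    sumsum (Real.sqrt 2 * (C : ℝ)) ψ v S
      ≤ sumsum (Real.sqrt 2 * (C : ℝ)) ψ v (insert m₀ S) := by
  classical
  set K : ℝ := Real.sqrt 2 * (C : ℝ) with hKdef
  have hK0 : 0 ≤ K := mul_nonneg (Real.sqrt_nonneg 2) C.coe_nonneg
  set bnd : Fin M → ℝ := fun m => (|ψ m 0| + (C : ℝ) * (Real.sqrt N * Bv)) + K * ((N : ℝ) * Bv)
    with hbnd
  have hbnd0 : ∀ m, 0 ≤ bnd m := fun m => by rw [hbnd]; positivity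
  set BB : ℝ := ∑ m, bnd m with hBB
  have habs := body_term_abs C ψ v Bv K hK0 hψ hBv0 hBv
  -- context function and its bound
  set A : (Fin M → Bool) → (Fin M → Fin N → Bool) → ι → ℝ := fun ε η h =>
    ∑ m ∈ Finset.univ.erase m₀,
      (if m ∈ S then K * ∑ j, sgn (η m j) * v h m j else sgn (ε m) * ψ m (v h m)) with hA
  have hAbound : ∀ ε η h, |A ε η h| ≤ BB := by
    intro ε η h
    calc |A ε η h| ≤ ∑ m ∈ Finset.univ.erase m₀,
          |if m ∈ S then K * ∑ j, sgn (η m j) * v h m j else sgn (ε m) * ψ m (v h m)| :=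
          Finset.abs_sum_le_sum_abs _ _
      _ ≤ ∑ m ∈ Finset.univ.erase m₀, bnd m :=
          Finset.sum_le_sum fun m _ => habs S ε η h m
      _ ≤ BB := Finset.sum_le_sum_of_subset_of_nonneg (Finset.subset_univ _)
          (fun m _ _ => hbnd0 m)
  -- the body equalities
  have e1 : ∀ ε η h, body K ψ v S (Function.update ε m₀ true) η h
      = A ε η h + ψ m₀ (v h m₀) := by
    intro ε η h
    rw [body, ← Finset.add_sum_erase _ _ (Finset.mem_univ m₀), if_neg hm₀,
      Function.update_self]
    have : ∀ m ∈ Finset.univ.erase m₀,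
        (if m ∈ S then K * ∑ j, sgn (η m j) * v h m j
          else sgn (Function.update ε m₀ true m) * ψ m (v h m))
        = (if m ∈ S then K * ∑ j, sgn (η m j) * v h m j else sgn (ε m) * ψ m (v h m)) := by
      intro m hm
      by_cases hmS : m ∈ S
      · rw [if_pos hmS, if_pos hmS]
      · rw [if_neg hmS, if_neg hmS, Function.update_of_ne (Finset.ne_of_mem_erase hm)]
    rw [Finset.sum_congr rfl this]
    simp [sgn, hA]
    ring
  have e2 : ∀ ε η h, body K ψ v S (Function.update ε m₀ false) η h
      = A ε η h - ψ m₀ (v h m₀) := by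
    intro ε η h
    rw [body, ← Finset.add_sum_erase _ _ (Finset.mem_univ m₀), if_neg hm₀,
      Function.update_self]
    have : ∀ m ∈ Finset.univ.erase m₀,
        (if m ∈ S then K * ∑ j, sgn (η m j) * v h m j
          else sgn (Function.update ε m₀ false m) * ψ m (v h m))
        = (if m ∈ S then K * ∑ j, sgn (η m j) * v h m j else sgn (ε m) * ψ m (v h m)) := by
      intro m hm
      by_cases hmS : m ∈ S
      · rw [if_pos hmS, if_pos hmS]
      · rw [if_neg hmS, if_neg hmS, Function.update_of_ne (Finset.ne_of_mem_erase hm)]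
    rw [Finset.sum_congr rfl this]
    simp [sgn, hA]
    ring
  have e3 : ∀ ε η (τ : Fin N → Bool) h,
      body K ψ v (insert m₀ S) ε (Function.update η m₀ τ) h
      = A ε η h + K * ∑ j, sgn (τ j) * v h m₀ j := by
    intro ε η τ h
    rw [body, ← Finset.add_sum_erase _ _ (Finset.mem_univ m₀),
      if_pos (Finset.mem_insert_self m₀ S), Function.update_self]
    have : ∀ m ∈ Finset.univ.erase m₀,
        (if m ∈ insert m₀ S then K * ∑ j, sgn (Function.update η m₀ τ m j) * v h m j
          else sgn (ε m) * ψ m (v h m))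
        = (if m ∈ S then K * ∑ j, sgn (η m j) * v h m j else sgn (ε m) * ψ m (v h m)) := by
      intro m hm
      have hmne := Finset.ne_of_mem_erase hm
      by_cases hmS : m ∈ S
      · rw [if_pos (Finset.mem_insert_of_mem hmS), if_pos hmS,
          Function.update_of_ne hmne]
      · rw [if_neg (by simp [Finset.mem_insert, hmne, hmS]), if_neg hmS]
    rw [Finset.sum_congr rfl this]
    ring
  -- pointwise application of `step`
  have key : ∀ ε η,
      (⨆ h, body K ψ v S (Function.update ε m₀ true) η h)
        + (⨆ h, body K ψ v S (Function.update ε m₀ false) η h)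
      ≤ 2 * ((2 ^ N : ℝ)⁻¹ * ∑ τ : Fin N → Bool,
          ⨆ h, body K ψ v (insert m₀ S) ε (Function.update η m₀ τ) h) := by
    intro ε η
    have hstep := step C (ψ m₀) (hψ m₀) (A ε η) (fun h => v h m₀) BB (hAbound ε η) Bv
      (fun h j => hBv h m₀ j)
    rw [iSup_congr (e1 ε η), iSup_congr (e2 ε η)]
    have : ∀ τ : Fin N → Bool,
        (⨆ h, body K ψ v (insert m₀ S) ε (Function.update η m₀ τ) h)
        = ⨆ h, (A ε η h + K * ∑ j, sgn (τ j) * v h m₀ j) :=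
      fun τ => iSup_congr (e3 ε η τ)
    rw [Finset.sum_congr rfl (fun τ _ => this τ)]
    rw [← hKdef] at hstep
    linarith [hstep]
  -- split the ε-sum at m₀ and the η-sum at m₀
  have hsplit_eps : (2 : ℝ) * sumsum K ψ v S
      = ∑ ε : Fin M → Bool, ∑ η : Fin M → Fin N → Bool,
          ((⨆ h, body K ψ v S (Function.update ε m₀ true) η h)
            + (⨆ h, body K ψ v S (Function.update ε m₀ false) η h)) := by
    have := sum_update_split m₀ (fun ε : Fin M → Bool =>
      ∑ η : Fin M → Fin N → Bool, ⨆ h, body K ψ v S ε η h)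
    rw [Fintype.sum_bool] at this
    rw [sumsum]
    rw [show ((Fintype.card Bool : ℝ)) = 2 by simp] at this
    rw [this, ← Finset.sum_add_distrib]
    exact Finset.sum_congr rfl fun ε _ => by rw [← Finset.sum_add_distrib]
  have hsplit_eta : ∀ ε : Fin M → Bool,
      (2 ^ N : ℝ) * ∑ η : Fin M → Fin N → Bool, ⨆ h, body K ψ v (insert m₀ S) ε η h
      = ∑ τ : Fin N → Bool, ∑ η : Fin M → Fin N → Bool,
          ⨆ h, body K ψ v (insert m₀ S) ε (Function.update η m₀ τ) h := by
    intro ε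
    have := sum_update_split m₀ (fun η : Fin M → Fin N → Bool =>
      ⨆ h, body K ψ v (insert m₀ S) ε η h)
    rw [show ((Fintype.card (Fin N → Bool) : ℝ)) = 2 ^ N by
      rw [Fintype.card_fun]; push_cast; simp] at this
    exact this
  -- conclude
  have main : (2 : ℝ) * sumsum K ψ v S ≤ 2 * sumsum K ψ v (insert m₀ S) := by
    rw [hsplit_eps]
    calc ∑ ε : Fin M → Bool, ∑ η : Fin M → Fin N → Bool,
          ((⨆ h, body K ψ v S (Function.update ε m₀ true) η h)
            + (⨆ h, body K ψ v S (Function.update ε m₀ false) η h))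
        ≤ ∑ ε : Fin M → Bool, ∑ η : Fin M → Fin N → Bool,
          (2 * ((2 ^ N : ℝ)⁻¹ * ∑ τ : Fin N → Bool,
            ⨆ h, body K ψ v (insert m₀ S) ε (Function.update η m₀ τ) h)) :=
          Finset.sum_le_sum fun ε _ => Finset.sum_le_sum fun η _ => key ε η
      _ = 2 * sumsum K ψ v (insert m₀ S) := by
          rw [sumsum, Finset.mul_sum]
          refine Finset.sum_congr rfl fun ε _ => ?_
          have hcancel : ∀ X : ℝ, (2 ^ N : ℝ)⁻¹ * ((2 ^ N : ℝ) * X) = X := fun X => by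
            field_simp
          calc ∑ η : Fin M → Fin N → Bool, (2 * ((2 ^ N : ℝ)⁻¹ * ∑ τ : Fin N → Bool,
                ⨆ h, body K ψ v (insert m₀ S) ε (Function.update η m₀ τ) h))
              = 2 * ((2 ^ N : ℝ)⁻¹ * ∑ η : Fin M → Fin N → Bool, ∑ τ : Fin N → Bool,
                ⨆ h, body K ψ v (insert m₀ S) ε (Function.update η m₀ τ) h) := by
                rw [Finset.mul_sum, Finset.mul_sum]
            _ = 2 * ((2 ^ N : ℝ)⁻¹ * ∑ τ : Fin N → Bool, ∑ η : Fin M → Fin N → Bool,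
                ⨆ h, body K ψ v (insert m₀ S) ε (Function.update η m₀ τ) h) := by
                rw [Finset.sum_comm]
            _ = 2 * ((2 ^ N : ℝ)⁻¹ * ((2 ^ N : ℝ)
                * ∑ η : Fin M → Fin N → Bool, ⨆ h, body K ψ v (insert m₀ S) ε η h)) := by
                rw [← hsplit_eta ε]
            _ = 2 * ∑ η : Fin M → Fin N → Bool, ⨆ h, body K ψ v (insert m₀ S) ε η h := by
                rw [hcancel]
  linarith

/-- Full contraction over all coordinates. -/
lemma sumsum_empty_le_univ (hψ : ∀ m, LipschitzWith C (ψ m))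
    (hBv0 : 0 ≤ Bv) (hBv : ∀ h m j, |v h m j| ≤ Bv) :
    sumsum (Real.sqrt 2 * (C : ℝ)) ψ v (∅ : Finset (Fin M))
      ≤ sumsum (Real.sqrt 2 * (C : ℝ)) ψ v (Finset.univ : Finset (Fin M)) := by
  classical
  have key : ∀ S : Finset (Fin M),
      sumsum (Real.sqrt 2 * (C : ℝ)) ψ v (∅ : Finset (Fin M))
        ≤ sumsum (Real.sqrt 2 * (C : ℝ)) ψ v S := by
    intro S
    induction S using Finset.induction_on with
    | empty => exact le_refl _
    | insert _ _ ha => exact le_trans (by assumption) (sumsum_le_insert C ψ v Bv hψ hBv0 hBv _ _ ha)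
  exact key Finset.univ

end Main

section Assemble

variable (C : NNReal) (ψ : Fin M → EuclideanSpace ℝ (Fin N) → ℝ)
  (v : ι → Fin M → EuclideanSpace ℝ (Fin N)) (Bv : ℝ)

lemma sumsum_empty_eq :
    sumsum (Real.sqrt 2 * (C : ℝ)) ψ v (∅ : Finset (Fin M))
      = (Fintype.card (Fin M → Fin N → Bool) : ℝ)
        * ∑ ε : Fin M → Bool, ⨆ h, ∑ m, sgn (ε m) * ψ m (v h m) := by
  rw [sumsum, Finset.mul_sum]
  refine Finset.sum_congr rfl fun ε _ => ?_
  have hb : ∀ (η : Fin M → Fin N → Bool) h,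
      body (Real.sqrt 2 * (C : ℝ)) ψ v (∅ : Finset (Fin M)) ε η h
        = ∑ m, sgn (ε m) * ψ m (v h m) := by
    intro η h
    rw [body]
    exact Finset.sum_congr rfl fun m _ => by rw [if_neg (Finset.notMem_empty m)]
  have : ∀ η : Fin M → Fin N → Bool,
      (⨆ h, body (Real.sqrt 2 * (C : ℝ)) ψ v (∅ : Finset (Fin M)) ε η h)
        = ⨆ h, ∑ m, sgn (ε m) * ψ m (v h m) := fun η => iSup_congr (hb η)
  rw [Finset.sum_congr rfl (fun η _ => this η), Finset.sum_const, Finset.card_univ,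
    nsmul_eq_mul]

lemma sumsum_univ_eq :
    sumsum (Real.sqrt 2 * (C : ℝ)) ψ v (Finset.univ : Finset (Fin M))
      = (2 ^ M : ℝ) * ∑ η : Fin M → Fin N → Bool,
          ⨆ h, ∑ m, Real.sqrt 2 * (C : ℝ) * ∑ j, sgn (η m j) * v h m j := by
  rw [sumsum, Finset.sum_comm, Finset.mul_sum]
  refine Finset.sum_congr rfl fun η _ => ?_
  have hb : ∀ (ε : Fin M → Bool) h,
      body (Real.sqrt 2 * (C : ℝ)) ψ v (Finset.univ : Finset (Fin M)) ε η h
        = ∑ m, Real.sqrt 2 * (C : ℝ) * ∑ j, sgn (η m j) * v h m j := by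
    intro ε h
    rw [body]
    exact Finset.sum_congr rfl fun m _ => by rw [if_pos (Finset.mem_univ m)]
  have : ∀ ε : Fin M → Bool,
      (⨆ h, body (Real.sqrt 2 * (C : ℝ)) ψ v (Finset.univ : Finset (Fin M)) ε η h)
        = ⨆ h, ∑ m, Real.sqrt 2 * (C : ℝ) * ∑ j, sgn (η m j) * v h m j :=
    fun ε => iSup_congr (hb ε)
  rw [Finset.sum_congr rfl (fun ε _ => this ε), Finset.sum_const, Finset.card_univ,
    nsmul_eq_mul]
  congr 1
  rw [Fintype.card_fun]
  push_cast
  simp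

/-- Coordinatewise subadditivity of the supremum. -/
lemma coord_subadd (K : ℝ) (hK0 : 0 ≤ K) (hBv : ∀ h m j, |v h m j| ≤ Bv)
    (η : Fin M → Fin N → Bool) :
    (⨆ h, ∑ m, K * ∑ j, sgn (η m j) * v h m j)
      ≤ ∑ j, ⨆ h, K * ∑ m, sgn (η m j) * v h m j := by
  have hbdd : ∀ j : Fin N, BddAbove (Set.range fun h => K * ∑ m, sgn (η m j) * v h m j) := by
    intro j
    refine ⟨K * ((M : ℝ) * Bv), ?_⟩
    rintro y ⟨h, rfl⟩
    refine mul_le_mul_of_nonneg_left ?_ hK0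
    calc ∑ m, sgn (η m j) * v h m j ≤ |∑ m, sgn (η m j) * v h m j| := le_abs_self _
      _ ≤ ∑ m, |sgn (η m j) * v h m j| := Finset.abs_sum_le_sum_abs _ _
      _ ≤ ∑ _m : Fin M, Bv := Finset.sum_le_sum fun m _ => by
          rw [abs_mul, abs_sgn, one_mul]; exact hBv h m j
      _ = (M : ℝ) * Bv := by rw [Finset.sum_const, Finset.card_univ, nsmul_eq_mul]; simp
  have hswap : ∀ h : ι, ∑ m, K * ∑ j, sgn (η m j) * v h m j
      = ∑ j, K * ∑ m, sgn (η m j) * v h m j := by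
    intro h
    rw [← Finset.mul_sum, ← Finset.mul_sum, Finset.sum_comm]
  refine ciSup_le fun h => ?_
  rw [hswap h]
  exact Finset.sum_le_sum fun j _ => le_ciSup (hbdd j) h

/-- Marginalizing the unused coordinates of `η`. -/
lemma marginalize (j : Fin N) (Φ : (Fin M → Bool) → ℝ) :
    ∑ η : Fin M → Fin N → Bool, Φ (fun m => η m j)
      = (Fintype.card (Fin M → {k : Fin N // k ≠ j} → Bool) : ℝ) * ∑ ε : Fin M → Bool, Φ ε := by
  classical
  set e : (Fin M → Fin N → Bool) ≃ (Fin M → Bool) × (Fin M → {k : Fin N // k ≠ j} → Bool) :=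
    (Equiv.piCongrRight (fun _ : Fin M => Equiv.piSplitAt j (fun _ : Fin N => Bool))).trans
      (Equiv.arrowProdEquivProdArrow _ _ _) with he
  have hkey : ∀ q : (Fin M → Bool) × (Fin M → {k : Fin N // k ≠ j} → Bool),
      (fun m => e.symm q m j) = q.1 := by
    intro q
    funext m
    simp [he, Equiv.arrowProdEquivProdArrow, Equiv.piSplitAt_symm_apply]
  rw [← Equiv.sum_comp e.symm (fun η => Φ (fun m => η m j))]
  have : ∀ q, Φ (fun m => e.symm q m j) = Φ q.1 := fun q => by rw [hkey]
  simp only [this]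
  rw [Fintype.sum_prod_type]
  calc ∑ ε : Fin M → Bool, ∑ ρ : Fin M → {k : Fin N // k ≠ j} → Bool, Φ (ε, ρ).1
      = ∑ ε : Fin M → Bool,
          (Fintype.card (Fin M → {k : Fin N // k ≠ j} → Bool) : ℝ) * Φ ε :=
        Finset.sum_congr rfl fun ε _ => by
          calc ∑ ρ : Fin M → {k : Fin N // k ≠ j} → Bool, Φ (ε, ρ).1
              = ∑ _ρ : Fin M → {k : Fin N // k ≠ j} → Bool, Φ ε :=
                Finset.sum_congr rfl fun ρ _ => rfl
            _ = (Fintype.card (Fin M → {k : Fin N // k ≠ j} → Bool) : ℝ) * Φ ε := by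
                rw [Finset.sum_const, Finset.card_univ, nsmul_eq_mul]
    _ = (Fintype.card (Fin M → {k : Fin N // k ≠ j} → Bool) : ℝ) * ∑ ε : Fin M → Bool, Φ ε := by
        rw [← Finset.mul_sum]

lemma card_eta (j : Fin N) :
    (Fintype.card (Fin M → Fin N → Bool) : ℝ)
      = (2 ^ M : ℝ) * (Fintype.card (Fin M → {k : Fin N // k ≠ j} → Bool) : ℝ) := by
  classical
  have e : (Fin M → Fin N → Bool) ≃ (Fin M → Bool) × (Fin M → {k : Fin N // k ≠ j} → Bool) :=
    (Equiv.piCongrRight (fun _ : Fin M => Equiv.piSplitAt j (fun _ : Fin N => Bool))).trans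
      (Equiv.arrowProdEquivProdArrow _ _ _)
  have h := Fintype.card_congr e
  rw [Fintype.card_prod] at h
  rw [h]
  push_cast
  congr 1
  rw [Fintype.card_fun]
  push_cast
  simp

end Assemble

/-- Maurer's vector-contraction inequality, coordinatewise form (abstract version). -/
theorem maurer {ι : Type*} [Nonempty ι] {M N : ℕ} (C : NNReal)
    (ψ : Fin M → EuclideanSpace ℝ (Fin N) → ℝ) (hψ : ∀ m, LipschitzWith C (ψ m))
    (v : ι → Fin M → EuclideanSpace ℝ (Fin N)) (Bv : ℝ) (hBv0 : 0 ≤ Bv)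
    (hBv : ∀ h m j, |v h m j| ≤ Bv) :
    (2 ^ M : ℝ)⁻¹ * ∑ ε : Fin M → Bool, ⨆ h, ∑ m, sgn (ε m) * ψ m (v h m)
      ≤ Real.sqrt 2 * (C : ℝ) * ∑ j : Fin N, (2 ^ M : ℝ)⁻¹ *
          ∑ ε : Fin M → Bool, ⨆ h, ∑ m, sgn (ε m) * v h m j := by
  classical
  set K : ℝ := Real.sqrt 2 * (C : ℝ) with hKdef
  have hK0 : 0 ≤ K := mul_nonneg (Real.sqrt_nonneg 2) C.coe_nonneg
  set Cη : ℝ := (Fintype.card (Fin M → Fin N → Bool) : ℝ) with hCη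
  have hCη0 : (0 : ℝ) < Cη := by
    rw [hCη]
    exact_mod_cast Fintype.card_pos
  set L : ℝ := ∑ ε : Fin M → Bool, ⨆ h, ∑ m, sgn (ε m) * ψ m (v h m) with hL
  set B : Fin N → ℝ := fun j => ∑ ε : Fin M → Bool, ⨆ h, ∑ m, sgn (ε m) * v h m j with hB
  -- step 1: contraction
  have h1 : Cη * L ≤ (2 ^ M : ℝ) * ∑ η : Fin M → Fin N → Bool,
      ⨆ h, ∑ m, K * ∑ j, sgn (η m j) * v h m j := by
    rw [hCη, hL, ← sumsum_empty_eq C ψ v, hKdef, ← sumsum_univ_eq C ψ v]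
    exact sumsum_empty_le_univ C ψ v Bv hψ hBv0 hBv
  -- step 2: coordinatewise subadditivity
  have h2 : ∑ η : Fin M → Fin N → Bool, ⨆ h, ∑ m, K * ∑ j, sgn (η m j) * v h m j
      ≤ ∑ j : Fin N, ∑ η : Fin M → Fin N → Bool, ⨆ h, K * ∑ m, sgn (η m j) * v h m j := by
    rw [← Finset.sum_comm]
    exact Finset.sum_le_sum fun η _ => coord_subadd v Bv K hK0 hBv η
  -- step 3: marginalization per coordinate
  have h3 : ∀ j : Fin N, ∑ η : Fin M → Fin N → Bool, ⨆ h, K * ∑ m, sgn (η m j) * v h m j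
      = (Fintype.card (Fin M → {k : Fin N // k ≠ j} → Bool) : ℝ)
        * ∑ ε : Fin M → Bool, ⨆ h, K * ∑ m, sgn (ε m) * v h m j := by
    intro j
    have := marginalize j (fun ε : Fin M → Bool => ⨆ h, K * ∑ m, sgn (ε m) * v h m j)
    rw [← this]
  -- step 4: pull `K` out of the supremum
  have h4 : ∀ (j : Fin N) (ε : Fin M → Bool),
      (⨆ h, K * ∑ m, sgn (ε m) * v h m j) = K * ⨆ h, ∑ m, sgn (ε m) * v h m j := by
    intro j ε
    rw [Real.mul_iSup_of_nonneg hK0]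
  -- combine
  have h5 : Cη * L ≤ Cη * ∑ j : Fin N, K * B j := by
    calc Cη * L ≤ (2 ^ M : ℝ) * ∑ η : Fin M → Fin N → Bool,
          ⨆ h, ∑ m, K * ∑ j, sgn (η m j) * v h m j := h1
      _ ≤ (2 ^ M : ℝ) * ∑ j : Fin N, ∑ η : Fin M → Fin N → Bool,
          ⨆ h, K * ∑ m, sgn (η m j) * v h m j :=
          mul_le_mul_of_nonneg_left h2 (by positivity)
      _ = ∑ j : Fin N, (2 ^ M : ℝ) * ((Fintype.card (Fin M → {k : Fin N // k ≠ j} → Bool) : ℝ)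
          * ∑ ε : Fin M → Bool, ⨆ h, K * ∑ m, sgn (ε m) * v h m j) := by
          rw [Finset.mul_sum]
          exact Finset.sum_congr rfl fun j _ => by rw [h3 j]
      _ = ∑ j : Fin N, Cη * (K * B j) := by
          refine Finset.sum_congr rfl fun j _ => ?_
          rw [hCη, card_eta j, hB]
          have : ∑ ε : Fin M → Bool, ⨆ h, K * ∑ m, sgn (ε m) * v h m j
              = K * ∑ ε : Fin M → Bool, ⨆ h, ∑ m, sgn (ε m) * v h m j := by
            rw [Finset.mul_sum]
            exact Finset.sum_congr rfl fun ε _ => h4 j ε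
          rw [this]
          ring
      _ = Cη * ∑ j : Fin N, K * B j := by rw [Finset.mul_sum]
  have h6 : L ≤ ∑ j : Fin N, K * B j := le_of_mul_le_mul_left h5 hCη0
  -- normalize
  calc (2 ^ M : ℝ)⁻¹ * L ≤ (2 ^ M : ℝ)⁻¹ * ∑ j : Fin N, K * B j :=
        mul_le_mul_of_nonneg_left h6 (by positivity)
    _ = K * ∑ j : Fin N, (2 ^ M : ℝ)⁻¹ * B j := by
        rw [Finset.mul_sum, Finset.mul_sum]
        exact Finset.sum_congr rfl fun j _ => by ring
    _ = Real.sqrt 2 * (C : ℝ) * ∑ j : Fin N, (2 ^ M : ℝ)⁻¹ * B j := by rw [hKdef]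

end Rad

/-- Coordinatewise decomposition of the Rademacher complexity of a Lipschitz-composed
vector-valued class (equation (28)):
`E_ξ[sup_h Σ_m ξ_m ψ_m(h(x_m))] ≤ √2 C Σ_j E_ξ[sup_h Σ_m ξ_m (h(x_m))_j]`,
where each `ψ_m : ℝ^N → ℝ` is `C`-Lipschitz in the Euclidean norm and `ξ` is uniform over
`{−1,+1}^M` in each expectation. -/
theorem rademacher_coordinatewise_decomposition {X : Type*} {M N : ℕ} (x : Fin M → X)
    (H : Set (X → EuclideanSpace ℝ (Fin N))) (hH : H.Nonempty)
    (hbdd : ∀ m, Bornology.IsBounded ((fun h => h (x m)) '' H))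
    (C : NNReal) (ψ : Fin M → EuclideanSpace ℝ (Fin N) → ℝ)
    (hψ : ∀ m, LipschitzWith C (ψ m)) :
    (2 ^ M : ℝ)⁻¹ *
        ∑ ε : Fin M → Bool, sSup ((fun h => ∑ m, sgn (ε m) * ψ m (h (x m))) '' H)
      ≤ Real.sqrt 2 * (C : ℝ) *
        ∑ j : Fin N, (2 ^ M : ℝ)⁻¹ *
          ∑ ε : Fin M → Bool, sSup ((fun h => ∑ m, sgn (ε m) * (h (x m)) j) '' H) := by
  classical
  have hne : Nonempty ↥H := hH.to_subtype
  -- uniform bound on the coordinates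
  have hRm : ∀ m : Fin M, ∃ R : ℝ, ∀ y ∈ ((fun h => h (x m)) '' H), ‖y‖ ≤ R :=
    fun m => (hbdd m).exists_norm_le
  choose R hR using hRm
  set Bv : ℝ := ∑ m, max 0 (R m) with hBvdef
  have hBv0 : 0 ≤ Bv := Finset.sum_nonneg fun m _ => le_max_left 0 (R m)
  set v : ↥H → Fin M → EuclideanSpace ℝ (Fin N) := fun h m => (h : X → _) (x m) with hv
  have hcoord : ∀ (y : EuclideanSpace ℝ (Fin N)) (j : Fin N), |y j| ≤ ‖y‖ := by
    intro y j
    rw [EuclideanSpace.norm_eq]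
    have h1 : |y j| = Real.sqrt (‖y j‖ ^ 2) := by
      rw [Real.norm_eq_abs, Real.sqrt_sq_eq_abs, abs_abs]
    rw [h1]
    apply Real.sqrt_le_sqrt
    exact Finset.single_le_sum (fun i _ => sq_nonneg ‖y i‖) (Finset.mem_univ j)
  have hBv : ∀ (h : ↥H) (m : Fin M) (j : Fin N), |v h m j| ≤ Bv := by
    intro h m j
    have h2 : ‖v h m‖ ≤ R m := hR m _ ⟨(h : X → _), h.2, rfl⟩
    have h3 : max 0 (R m) ≤ Bv :=
      Finset.single_le_sum (fun i (_ : i ∈ Finset.univ) => le_max_left 0 (R i))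
        (Finset.mem_univ m)
    calc |v h m j| ≤ ‖v h m‖ := hcoord _ j
      _ ≤ R m := h2
      _ ≤ max 0 (R m) := le_max_right _ _
      _ ≤ Bv := h3
  -- rewrite suprema over the image as suprema over the subtype
  have himg : ∀ (f : (X → EuclideanSpace ℝ (Fin N)) → ℝ),
      sSup (f '' H) = ⨆ h : ↥H, f ↑h := by
    intro f
    rw [Set.image_eq_range]
    rfl
  have lhs_eq : ∑ ε : Fin M → Bool, sSup ((fun h => ∑ m, sgn (ε m) * ψ m (h (x m))) '' H)
      = ∑ ε : Fin M → Bool, ⨆ h : ↥H, ∑ m, sgn (ε m) * ψ m (v h m) :=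
    Finset.sum_congr rfl fun ε _ => himg _
  have rhs_eq : ∀ j : Fin N,
      ∑ ε : Fin M → Bool, sSup ((fun h => ∑ m, sgn (ε m) * (h (x m)) j) '' H)
      = ∑ ε : Fin M → Bool, ⨆ h : ↥H, ∑ m, sgn (ε m) * v h m j :=
    fun j => Finset.sum_congr rfl fun ε _ => himg _
  have rhs_eq2 : ∑ j : Fin N, (2 ^ M : ℝ)⁻¹ *
        ∑ ε : Fin M → Bool, sSup ((fun h => ∑ m, sgn (ε m) * (h (x m)) j) '' H)
      = ∑ j : Fin N, (2 ^ M : ℝ)⁻¹ *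
        ∑ ε : Fin M → Bool, ⨆ h : ↥H, ∑ m, sgn (ε m) * v h m j :=
    Finset.sum_congr rfl fun j _ => by rw [rhs_eq j]
  rw [lhs_eq, rhs_eq2]
  exact Rad.maurer C ψ hψ v Bv hBv0 hBv
end

section
/- Talagrand contraction principle for Rademacher averages: let F ⊆ ℝ^M be a nonempty bounded set and let φ : ℝ → ℝ be 1-Lipschitz. Then E_ξ[ sup_{t ∈ F} Σ_{m=1}^M ξ_m φ(t_m) ] ≤ E_ξ[ sup_{t ∈ F} Σ_{m=1}^M ξ_m t_m ], where ξ is uniform over {−1,+1}^M. -/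
lemma sgn_cases (b : Bool) : sgn b = 1 ∨ sgn b = -1 := by
  cases b <;> simp [sgn]

/-- One-dimensional contraction step. -/
lemma key_step {α : Type*} (F : Set α) (hne : F.Nonempty) (φ : ℝ → ℝ)
    (hφ : LipschitzWith 1 φ) (a b : α → ℝ) (c : ℝ) (hc : c = 1 ∨ c = -1)
    (h1 : BddAbove ((fun t => a t + c * b t) '' F))
    (h2 : BddAbove ((fun t => a t - c * b t) '' F)) :
    sSup ((fun t => a t + c * φ (b t)) '' F) + sSup ((fun t => a t - c * φ (b t)) '' F)
      ≤ sSup ((fun t => a t + c * b t) '' F) + sSup ((fun t => a t - c * b t) '' F) := by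
  set A := sSup ((fun t => a t + c * b t) '' F) with hA
  set B := sSup ((fun t => a t - c * b t) '' F) with hB
  have hc1 : |c| = 1 := by rcases hc with rfl | rfl <;> simp
  have hpt : ∀ s ∈ F, ∀ t ∈ F, (a s + c * φ (b s)) + (a t - c * φ (b t)) ≤ A + B := by
    intro s hs t ht
    have hlip : c * φ (b s) - c * φ (b t) ≤ |b s - b t| := by
      calc c * φ (b s) - c * φ (b t) = c * (φ (b s) - φ (b t)) := by ring
        _ ≤ |c * (φ (b s) - φ (b t))| := le_abs_self _
        _ = |φ (b s) - φ (b t)| := by rw [abs_mul, hc1, one_mul]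
        _ ≤ |b s - b t| := by
            have := hφ.dist_le_mul (b s) (b t)
            simpa [Real.dist_eq] using this
    have habs : |b s - b t| = |c * b s - c * b t| := by
      rw [show c * b s - c * b t = c * (b s - b t) by ring, abs_mul, hc1, one_mul]
    have hsA : a s + c * b s ≤ A := le_csSup h1 ⟨s, hs, rfl⟩
    have htA : a t + c * b t ≤ A := le_csSup h1 ⟨t, ht, rfl⟩
    have hsB : a s - c * b s ≤ B := le_csSup h2 ⟨s, hs, rfl⟩
    have htB : a t - c * b t ≤ B := le_csSup h2 ⟨t, ht, rfl⟩
    rcases le_total (c * b t) (c * b s) with h | h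
    · have : |c * b s - c * b t| = c * b s - c * b t := abs_of_nonneg (by linarith)
      rw [habs, this] at hlip
      linarith
    · have : |c * b s - c * b t| = c * b t - c * b s := by
        rw [abs_sub_comm]; exact abs_of_nonneg (by linarith)
      rw [habs, this] at hlip
      linarith
  have hne1 : ((fun t => a t + c * φ (b t)) '' F).Nonempty := hne.image _
  have hne2 : ((fun t => a t - c * φ (b t)) '' F).Nonempty := hne.image _
  have h1' : sSup ((fun t => a t + c * φ (b t)) '' F)
      ≤ (A + B) - sSup ((fun t => a t - c * φ (b t)) '' F) := by
    refine csSup_le hne1 ?_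
    rintro x ⟨s, hs, rfl⟩
    show a s + c * φ (b s) ≤ (A + B) - sSup ((fun t => a t - c * φ (b t)) '' F)
    have hs2 : sSup ((fun t => a t - c * φ (b t)) '' F) ≤ A + B - (a s + c * φ (b s)) := by
      refine csSup_le hne2 ?_
      rintro y ⟨t, ht, rfl⟩
      show a t - c * φ (b t) ≤ A + B - (a s + c * φ (b s))
      have := hpt s hs t ht
      linarith
    linarith
  linarith

noncomputable def Phi {M : ℕ} (F : Set (Fin M → ℝ)) (φ : ℝ → ℝ)
    (S : Finset (Fin M)) (ε : Fin M → Bool) : ℝ :=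
  sSup ((fun t => ∑ m, sgn (ε m) * (if m ∈ S then φ (t m) else t m)) '' F)

lemma phi_bdd {M : ℕ} (F : Set (Fin M → ℝ)) (hbdd : Bornology.IsBounded F)
    (φ : ℝ → ℝ) (hφ : LipschitzWith 1 φ) (S : Finset (Fin M)) (ε : Fin M → Bool) :
    BddAbove ((fun t => ∑ m, sgn (ε m) * (if m ∈ S then φ (t m) else t m)) '' F) := by
  obtain ⟨C, hC⟩ := (isBounded_iff_forall_norm_le).mp hbdd
  refine ⟨M * (C + |φ 0|), ?_⟩
  rintro x ⟨t, ht, rfl⟩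
  have hterm : ∀ m : Fin M, sgn (ε m) * (if m ∈ S then φ (t m) else t m) ≤ C + |φ 0| := by
    intro m
    have htm : |t m| ≤ C := by
      have h1 : ‖t m‖ ≤ ‖t‖ := norm_le_pi_norm t m
      have h2 := hC t ht
      simpa [Real.norm_eq_abs] using h1.trans h2
    have hC0 : 0 ≤ C := le_trans (abs_nonneg _) htm
    have hsgn : |sgn (ε m)| = 1 := by cases ε m <;> simp [sgn]
    refine le_trans (le_abs_self _) ?_
    rw [abs_mul, hsgn, one_mul]
    split_ifs with h
    · have hlip : |φ (t m) - φ 0| ≤ |t m - 0| := by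
        have := hφ.dist_le_mul (t m) 0
        simpa [Real.dist_eq] using this
      calc |φ (t m)| = |(φ (t m) - φ 0) + φ 0| := by ring_nf
        _ ≤ |φ (t m) - φ 0| + |φ 0| := abs_add_le _ _
        _ ≤ |t m| + |φ 0| := by simpa using hlip
        _ ≤ C + |φ 0| := by linarith
    · have : (0:ℝ) ≤ |φ 0| := abs_nonneg _
      linarith
  calc ∑ m, sgn (ε m) * (if m ∈ S then φ (t m) else t m)
      ≤ ∑ _m : Fin M, (C + |φ 0|) := Finset.sum_le_sum fun m _ => hterm m
    _ = M * (C + |φ 0|) := by simp [Finset.sum_const, Finset.card_univ]; ring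

lemma phi_step {M : ℕ} (F : Set (Fin M → ℝ)) (hne : F.Nonempty)
    (hbdd : Bornology.IsBounded F) (φ : ℝ → ℝ) (hφ : LipschitzWith 1 φ)
    (S : Finset (Fin M)) (k : Fin M) (hk : k ∉ S) :
    ∑ ε : Fin M → Bool, Phi F φ (insert k S) ε ≤ ∑ ε : Fin M → Bool, Phi F φ S ε := by
  classical
  set T := insert k S with hT
  set flip : (Fin M → Bool) → (Fin M → Bool) := fun ε => Function.update ε k (!ε k) with hflip
  have hinv : Function.Involutive flip := by
    intro ε
    funext m
    by_cases hm : m = k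
    · subst hm; simp [hflip, Function.update_self]
    · simp [hflip, Function.update_of_ne hm]
  have hsum : ∀ g : (Fin M → Bool) → ℝ, ∑ ε, g (flip ε) = ∑ ε, g ε :=
    fun g => Fintype.sum_bijective flip hinv.bijective _ _ (fun ε => rfl)
  have key2 : ∀ ε : Fin M → Bool,
      Phi F φ T ε + Phi F φ T (flip ε) ≤ Phi F φ S ε + Phi F φ S (flip ε) := by
    intro ε
    set c := sgn (ε k) with hcdef
    set a : (Fin M → ℝ) → ℝ :=
      fun t => ∑ m ∈ Finset.univ.erase k, sgn (ε m) * (if m ∈ S then φ (t m) else t m) with ha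
    have hc : c = 1 ∨ c = -1 := sgn_cases (ε k)
    have hflipm : ∀ m, m ≠ k → flip ε m = ε m := by
      intro m hm; simp [hflip, Function.update_of_ne hm]
    have hflipk : sgn (flip ε k) = -c := by
      cases hεk : ε k <;> simp [hflip, Function.update_self, sgn, hcdef, hεk]
    have hsplit : ∀ (δ : Fin M → Bool) (U : Finset (Fin M)),
        (∀ m, m ≠ k → δ m = ε m) →
        ∀ t : Fin M → ℝ, ∑ m, sgn (δ m) * (if m ∈ U then φ (t m) else t m)
          = (∑ m ∈ Finset.univ.erase k, sgn (ε m) * (if m ∈ U then φ (t m) else t m))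
            + sgn (δ k) * (if k ∈ U then φ (t k) else t k) := by
      intro δ U hδ t
      rw [← Finset.sum_erase_add _ _ (Finset.mem_univ k)]
      congr 1
      refine Finset.sum_congr rfl fun m hm => ?_
      rw [hδ m (Finset.ne_of_mem_erase hm)]
    have hTS : ∀ m, m ≠ k → ((m ∈ T) = (m ∈ S)) := by
      intro m hm
      simp [hT, Finset.mem_insert, hm]
    have haT : ∀ t, (∑ m ∈ Finset.univ.erase k, sgn (ε m) * (if m ∈ T then φ (t m) else t m)) = a t := by
      intro t
      refine Finset.sum_congr rfl fun m hm => ?_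
      have hmk := Finset.ne_of_mem_erase hm
      simp [hT, Finset.mem_insert, hmk]
    have e1 : Phi F φ T ε = sSup ((fun t => a t + c * φ (t k)) '' F) := by
      unfold Phi
      congr 1
      refine Set.image_congr fun t _ => ?_
      rw [hsplit ε T (fun _ _ => rfl) t, haT t, if_pos (Finset.mem_insert_self k S)]
    have e2 : Phi F φ T (flip ε) = sSup ((fun t => a t - c * φ (t k)) '' F) := by
      unfold Phi
      congr 1
      refine Set.image_congr fun t _ => ?_
      rw [hsplit (flip ε) T hflipm t, haT t, if_pos (Finset.mem_insert_self k S), hflipk]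
      ring
    have e3 : Phi F φ S ε = sSup ((fun t => a t + c * t k) '' F) := by
      unfold Phi
      congr 1
      refine Set.image_congr fun t _ => ?_
      rw [hsplit ε S (fun _ _ => rfl) t, if_neg hk]
    have e4 : Phi F φ S (flip ε) = sSup ((fun t => a t - c * t k) '' F) := by
      unfold Phi
      congr 1
      refine Set.image_congr fun t _ => ?_
      rw [hsplit (flip ε) S hflipm t, if_neg hk, hflipk]
      ring
    have hb1 : BddAbove ((fun t => a t + c * t k) '' F) := by
      have := phi_bdd F hbdd φ hφ S ε
      rwa [show ((fun t => ∑ m, sgn (ε m) * (if m ∈ S then φ (t m) else t m)) '' F)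
          = (fun t => a t + c * t k) '' F from
        Set.image_congr fun t _ => by rw [hsplit ε S (fun _ _ => rfl) t, if_neg hk]] at this
    have hb2 : BddAbove ((fun t => a t - c * t k) '' F) := by
      have := phi_bdd F hbdd φ hφ S (flip ε)
      rwa [show ((fun t => ∑ m, sgn (flip ε m) * (if m ∈ S then φ (t m) else t m)) '' F)
          = (fun t => a t - c * t k) '' F from
        Set.image_congr fun t _ => by
          rw [hsplit (flip ε) S hflipm t, if_neg hk, hflipk]; ring] at this
    rw [e1, e2, e3, e4]
    exact key_step F hne φ hφ a (fun t => t k) c hc hb1 hb2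
  have h2 : (∑ ε : Fin M → Bool, Phi F φ T ε) + (∑ ε : Fin M → Bool, Phi F φ T ε)
      ≤ (∑ ε : Fin M → Bool, Phi F φ S ε) + (∑ ε : Fin M → Bool, Phi F φ S ε) := by
    calc (∑ ε : Fin M → Bool, Phi F φ T ε) + (∑ ε : Fin M → Bool, Phi F φ T ε)
        = ∑ ε : Fin M → Bool, (Phi F φ T ε + Phi F φ T (flip ε)) := by
          rw [Finset.sum_add_distrib, hsum (Phi F φ T)]
      _ ≤ ∑ ε : Fin M → Bool, (Phi F φ S ε + Phi F φ S (flip ε)) :=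
          Finset.sum_le_sum fun ε _ => key2 ε
      _ = (∑ ε : Fin M → Bool, Phi F φ S ε) + (∑ ε : Fin M → Bool, Phi F φ S ε) := by
          rw [Finset.sum_add_distrib, hsum (Phi F φ S)]
  linarith

/-- Talagrand's contraction principle for Rademacher averages: for a nonempty bounded set
`F ⊆ ℝ^M` and a `1`-Lipschitz function `φ : ℝ → ℝ`,
`E_ξ[sup_{t ∈ F} Σ_m ξ_m φ(t_m)] ≤ E_ξ[sup_{t ∈ F} Σ_m ξ_m t_m]`,
where `ξ` is uniform over `{−1,+1}^M`. -/
theorem talagrand_contraction {M : ℕ} (F : Set (Fin M → ℝ)) (hne : F.Nonempty)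
    (hbdd : Bornology.IsBounded F) (φ : ℝ → ℝ) (hφ : LipschitzWith 1 φ) :
    (2 ^ M : ℝ)⁻¹ * ∑ ε : Fin M → Bool, sSup ((fun t => ∑ m, sgn (ε m) * φ (t m)) '' F)
      ≤ (2 ^ M : ℝ)⁻¹ * ∑ ε : Fin M → Bool, sSup ((fun t => ∑ m, sgn (ε m) * t m) '' F) := by
  classical
  have hmono : ∀ S : Finset (Fin M),
      ∑ ε : Fin M → Bool, Phi F φ S ε ≤ ∑ ε : Fin M → Bool, Phi F φ ∅ ε := by
    intro S
    induction S using Finset.induction_on with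
    | empty => exact le_refl _
    | insert a s hk ih => exact (phi_step F hne hbdd φ hφ _ _ hk).trans ih
  have hfin := hmono Finset.univ
  have eL : ∀ ε : Fin M → Bool, Phi F φ Finset.univ ε
      = sSup ((fun t => ∑ m, sgn (ε m) * φ (t m)) '' F) := by
    intro ε; unfold Phi; simp
  have eR : ∀ ε : Fin M → Bool, Phi F φ ∅ ε
      = sSup ((fun t => ∑ m, sgn (ε m) * t m) '' F) := by
    intro ε; unfold Phi; simp
  refine mul_le_mul_of_nonneg_left ?_ (by positivity)
  calc ∑ ε : Fin M → Bool, sSup ((fun t => ∑ m, sgn (ε m) * φ (t m)) '' F)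
      = ∑ ε : Fin M → Bool, Phi F φ Finset.univ ε := by
        exact Finset.sum_congr rfl fun ε _ => (eL ε).symm
    _ ≤ ∑ ε : Fin M → Bool, Phi F φ ∅ ε := hfin
    _ = ∑ ε : Fin M → Bool, sSup ((fun t => ∑ m, sgn (ε m) * t m) '' F) :=
        Finset.sum_congr rfl fun ε _ => eR ε
end
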